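/- arXiv:2106.07239 — 9 statements merged into one kernel-verified Lean document; each statement's English description precedes it below -/
import Mathlib

section
/- Let (X, d) be a metric space, S a nonempty finite subset of X, and let j, s*, s be points of X with s ∈ S. Let s' ∈ S be a nearest point of S to s*, i.e., d(s', s*) ≤ d(t, s*) for all t ∈ S. Then d(j, s') ≤ 2·d(j, s*) + d(j, s). -/
/-- If `s'` is a nearest point of a nonempty finite set `S` to `s*`, and `s ∈ S`,
then `d(j, s') ≤ 2·d(j, s*) + d(j, s)`. -/
theorem stmt_1 {X : Type*} [MetricSpace X] (S : Finset X) (hS : S.Nonempty)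
    (j sstar s s' : X) (hs : s ∈ S) (hs' : s' ∈ S)
    (hnear : ∀ t ∈ S, dist s' sstar ≤ dist t sstar) :
    dist j s' ≤ 2 * dist j sstar + dist j s := by
  have h1 := hnear s hs
  have h2 : dist j s' ≤ dist j sstar + dist sstar s' := dist_triangle _ _ _
  have h3 : dist s sstar ≤ dist s j + dist j sstar := dist_triangle _ _ _
  rw [dist_comm sstar s'] at h2
  rw [dist_comm s j] at h3
  linarith
end

section
/- Let (X, d) be a metric space, P a finite set of points of X, and S a nonempty finite subset of X. Let φ : P → S and φ* : P → X be maps, and let φ' : P → S be a map such that for every j ∈ P, φ'(j) is a nearest point of S to φ*(j) (i.e., d(φ'(j), φ*(j)) ≤ d(t, φ*(j)) for all t ∈ S). Then for every real p ≥ 1, (∑_{j∈P} d(j, φ'(j))^p)^{1/p} ≤ 2·(∑_{j∈P} d(j, φ*(j))^p)^{1/p} + (∑_{j∈P} d(j, φ(j))^p)^{1/p}. In particular, if (∑_{j∈P} d(j, φ*(j))^p)^{1/p} ≤ U and (∑_{j∈P} d(j, φ(j))^p)^{1/p} ≤ α·U for reals U ≥ 0 and α ≥ 0, then (∑_{j∈P}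 d(j, φ'(j))^p)^{1/p} ≤ (2 + α)·U. -/
open Finset in
/-- Rerouting cost bound: if `φ'(j)` is a nearest point of `S` to `φ*(j)` for each `j ∈ P`,
then the `p`-norm clustering cost of `φ'` is at most twice that of `φ*` plus that of `φ`;
in particular, costs `≤ U` and `≤ α·U` give cost `≤ (2+α)·U` for `φ'`. -/
theorem stmt_2 {X : Type*} [MetricSpace X] (P : Finset X) (S : Finset X) (hS : S.Nonempty)
    (φ φstar φ' : X → X)
    (hφ : ∀ j ∈ P, φ j ∈ S) (hφ' : ∀ j ∈ P, φ' j ∈ S)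
    (hnear : ∀ j ∈ P, ∀ t ∈ S, dist (φ' j) (φstar j) ≤ dist t (φstar j))
    (p : ℝ) (hp : 1 ≤ p) :
    ((∑ j ∈ P, dist j (φ' j) ^ p) ^ (1 / p) ≤
        2 * (∑ j ∈ P, dist j (φstar j) ^ p) ^ (1 / p) +
          (∑ j ∈ P, dist j (φ j) ^ p) ^ (1 / p)) ∧
    (∀ U α : ℝ, 0 ≤ U → 0 ≤ α →
      (∑ j ∈ P, dist j (φstar j) ^ p) ^ (1 / p) ≤ U →
      (∑ j ∈ P, dist j (φ j) ^ p) ^ (1 / p) ≤ α * U →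
      (∑ j ∈ P, dist j (φ' j) ^ p) ^ (1 / p) ≤ (2 + α) * U) := by
  have hp0 : 0 < p := lt_of_lt_of_le one_pos hp
  have key : (∑ j ∈ P, dist j (φ' j) ^ p) ^ (1 / p) ≤
      2 * (∑ j ∈ P, dist j (φstar j) ^ p) ^ (1 / p) +
        (∑ j ∈ P, dist j (φ j) ^ p) ^ (1 / p) := by
    have hpt : ∀ j ∈ P, dist j (φ' j) ≤ 2 * dist j (φstar j) + dist j (φ j) := by
      intro j hj
      have h1 : dist j (φ' j) ≤ dist j (φstar j) + dist (φstar j) (φ' j) :=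
        dist_triangle _ _ _
      have h2 : dist (φ' j) (φstar j) ≤ dist (φ j) (φstar j) :=
        hnear j hj (φ j) (hφ j hj)
      have h3 : dist (φ j) (φstar j) ≤ dist (φ j) j + dist j (φstar j) :=
        dist_triangle _ _ _
      have h4 : dist (φstar j) (φ' j) = dist (φ' j) (φstar j) := dist_comm _ _
      have h5 : dist (φ j) j = dist j (φ j) := dist_comm _ _
      linarith
    have step1 : (∑ j ∈ P, dist j (φ' j) ^ p) ^ (1 / p) ≤
        (∑ j ∈ P, (2 * dist j (φstar j) + dist j (φ j)) ^ p) ^ (1 / p) := by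
      apply Real.rpow_le_rpow (Finset.sum_nonneg fun j _ =>
        Real.rpow_nonneg dist_nonneg p)
      · exact Finset.sum_le_sum fun j hj =>
          Real.rpow_le_rpow dist_nonneg (hpt j hj) hp0.le
      · positivity
    have step2 : (∑ j ∈ P, (2 * dist j (φstar j) + dist j (φ j)) ^ p) ^ (1 / p) ≤
        (∑ j ∈ P, (2 * dist j (φstar j)) ^ p) ^ (1 / p) +
          (∑ j ∈ P, dist j (φ j) ^ p) ^ (1 / p) :=
      Real.Lp_add_le_of_nonneg P hp
        (fun j _ => by positivity) (fun j _ => dist_nonneg)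
    have step3 : (∑ j ∈ P, (2 * dist j (φstar j)) ^ p) ^ (1 / p) =
        2 * (∑ j ∈ P, dist j (φstar j) ^ p) ^ (1 / p) := by
      have : ∀ j ∈ P, (2 * dist j (φstar j)) ^ p = 2 ^ p * dist j (φstar j) ^ p :=
        fun j _ => Real.mul_rpow (by norm_num) dist_nonneg
      rw [Finset.sum_congr rfl this, ← Finset.mul_sum,
        Real.mul_rpow (by positivity) (Finset.sum_nonneg fun j _ =>
          Real.rpow_nonneg dist_nonneg p),
        ← Real.rpow_mul (by norm_num), mul_one_div, div_self hp0.ne', Real.rpow_one]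
    calc (∑ j ∈ P, dist j (φ' j) ^ p) ^ (1 / p) ≤ _ := step1
      _ ≤ _ := step2
      _ = _ := by rw [step3]
  refine ⟨key, fun U α hU hα h1 h2 => ?_⟩
  calc (∑ j ∈ P, dist j (φ' j) ^ p) ^ (1 / p) ≤ _ := key
    _ ≤ 2 * U + α * U := by nlinarith
    _ = (2 + α) * U := by ring
end

section
/- Let P be a finite set of points, H a set of colors, χ : P → H a coloring, S* and S finite sets of centers, φ* : P → S* an assignment, ρ : S* → S a routing map, and φ' = ρ ∘ φ* : P → S the composed assignment. For a finite set C of points and a color h, write prop_h(C) = |{j ∈ C : χ(j) = h}| / |C| when C is nonempty. Then for every s ∈ S with φ'⁻¹(s) nonempty, letting N(s) = {i ∈ S* : ρ(i) = s and φ*⁻¹(i) is nonempty}, we have min_{i∈N(s)} prop_h(φ*⁻¹(i)) ≤ prop_h(φ'⁻¹(s)) ≤ max_{i∈N(s)} prop_h(φ*⁻¹(i)). Consequently, if l ≤ prop_h(φ*⁻¹(i)) ≤ u holds for every nonempty cluster φ*⁻¹(i) of φ*, then l ≤ prop_h(φ'⁻¹(s)) ≤ u holds for every nonempty cluster φ'⁻¹(s)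 of φ'. -/
/-- Mediant inequality: the ratio of sums lies between the min and max of ratios. -/
lemma mediant_bounds {β : Type*} (T : Finset β) (hT : T.Nonempty) (a b : β → ℝ)
    (hb : ∀ i ∈ T, 0 < b i) :
    T.inf' hT (fun i => a i / b i) ≤ (∑ i ∈ T, a i) / (∑ i ∈ T, b i) ∧
    (∑ i ∈ T, a i) / (∑ i ∈ T, b i) ≤ T.sup' hT (fun i => a i / b i) := by
  have hbsum : 0 < ∑ i ∈ T, b i := Finset.sum_pos hb hT
  constructor
  · rw [le_div_iff₀ hbsum, Finset.mul_sum]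
    refine Finset.sum_le_sum fun i hi => ?_
    have h1 : T.inf' hT (fun i => a i / b i) ≤ a i / b i := Finset.inf'_le (fun i => a i / b i) hi
    calc T.inf' hT (fun i => a i / b i) * b i ≤ (a i / b i) * b i := by
          exact mul_le_mul_of_nonneg_right h1 (le_of_lt (hb i hi))
      _ = a i := div_mul_cancel₀ _ (ne_of_gt (hb i hi))
  · rw [div_le_iff₀ hbsum, Finset.mul_sum]
    refine Finset.sum_le_sum fun i hi => ?_
    have h1 : a i / b i ≤ T.sup' hT (fun i => a i / b i) := Finset.le_sup' (fun i => a i / b i) hi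
    calc a i = (a i / b i) * b i := (div_mul_cancel₀ _ (ne_of_gt (hb i hi))).symm
      _ ≤ T.sup' hT (fun i => a i / b i) * b i :=
          mul_le_mul_of_nonneg_right h1 (le_of_lt (hb i hi))

/-- Fairness preservation under routing: composing an assignment `φ*` into centers `S*`
with a routing map `ρ : S* → S` yields clusters whose color-`h` proportion lies between
the min and max proportions of the constituent clusters; consequently proportion bounds
`[l, u]` are preserved. -/
theorem stmt_3 {α β γ H : Type*} [DecidableEq β] [DecidableEq γ] [DecidableEq H]
    (P : Finset α) (χ : α → H) (h : H)
    (Sstar : Finset β) (S : Finset γ)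
    (φstar : α → β) (ρ : β → γ)
    (hφstar : ∀ j ∈ P, φstar j ∈ Sstar)
    (hρ : ∀ i ∈ Sstar, ρ i ∈ S) :
    let φ' : α → γ := fun j => ρ (φstar j)
    let cluster : β → Finset α := fun i => P.filter (fun j => φstar j = i)
    let cluster' : γ → Finset α := fun s => P.filter (fun j => φ' j = s)
    let prop : Finset α → ℝ := fun Cl => ((Cl.filter (fun j => χ j = h)).card : ℝ) / Cl.card
    let N : γ → Finset β := fun s => Sstar.filter (fun i => ρ i = s ∧ (cluster i).Nonempty)
    (∀ s ∈ S, (cluster' s).Nonempty →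
      ∃ hN : (N s).Nonempty,
        (N s).inf' hN (fun i => prop (cluster i)) ≤ prop (cluster' s) ∧
        prop (cluster' s) ≤ (N s).sup' hN (fun i => prop (cluster i))) ∧
    (∀ l u : ℝ,
      (∀ i ∈ Sstar, (cluster i).Nonempty → l ≤ prop (cluster i) ∧ prop (cluster i) ≤ u) →
      (∀ s ∈ S, (cluster' s).Nonempty → l ≤ prop (cluster' s) ∧ prop (cluster' s) ≤ u)) := by
  classical
  intro φ' cluster cluster' prop N
  -- decomposition of cluster' s into clusters
  have hdecomp : ∀ s : γ, cluster' s = (N s).biUnion cluster := by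
    intro s
    ext j
    simp only [cluster', cluster, N, φ', Finset.mem_biUnion, Finset.mem_filter]
    constructor
    · rintro ⟨hjP, hjs⟩
      exact ⟨φstar j, ⟨hφstar j hjP, hjs, ⟨j, Finset.mem_filter.mpr ⟨hjP, rfl⟩⟩⟩, hjP, rfl⟩
    · rintro ⟨i, ⟨_, his, _⟩, hjP, hji⟩
      exact ⟨hjP, hji ▸ his⟩
  have hdisj : ∀ s : γ, ∀ i ∈ N s, ∀ i' ∈ N s, i ≠ i' →
      Disjoint (cluster i) (cluster i') := by
    intro s i _ i' _ hne
    refine Finset.disjoint_left.mpr fun j hj hj' => hne ?_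
    have h1 := (Finset.mem_filter.mp hj).2
    have h2 := (Finset.mem_filter.mp hj').2
    exact h1 ▸ h2 ▸ rfl
  have hcard : ∀ s : γ, ((cluster' s).card : ℝ) = ∑ i ∈ N s, ((cluster i).card : ℝ) := by
    intro s
    rw [hdecomp s, Finset.card_biUnion (hdisj s)]
    push_cast
    rfl
  have hcardh : ∀ s : γ, (((cluster' s).filter (fun j => χ j = h)).card : ℝ)
      = ∑ i ∈ N s, (((cluster i).filter (fun j => χ j = h)).card : ℝ) := by
    intro s
    rw [hdecomp s, Finset.filter_biUnion, Finset.card_biUnion]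
    · push_cast; rfl
    · intro i hi i' hi' hne
      exact Finset.disjoint_filter_filter (hdisj s i hi i' hi' hne)
  have main : ∀ s ∈ S, (cluster' s).Nonempty →
      ∃ hN : (N s).Nonempty,
        (N s).inf' hN (fun i => prop (cluster i)) ≤ prop (cluster' s) ∧
        prop (cluster' s) ≤ (N s).sup' hN (fun i => prop (cluster i)) := by
    intro s _ hne
    obtain ⟨j, hj⟩ := hne
    have hjP : j ∈ P := (Finset.mem_filter.mp hj).1
    have hjs : ρ (φstar j) = s := (Finset.mem_filter.mp hj).2
    have hN : (N s).Nonempty := by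
      refine ⟨φstar j, Finset.mem_filter.mpr ⟨hφstar j hjP, hjs, ⟨j, ?_⟩⟩⟩
      exact Finset.mem_filter.mpr ⟨hjP, rfl⟩
    refine ⟨hN, ?_⟩
    have hb : ∀ i ∈ N s, (0 : ℝ) < (cluster i).card := by
      intro i hi
      have := (Finset.mem_filter.mp hi).2.2
      exact_mod_cast Finset.card_pos.mpr this
    have := mediant_bounds (N s) hN
      (fun i => (((cluster i).filter (fun j => χ j = h)).card : ℝ))
      (fun i => ((cluster i).card : ℝ)) hb
    have hrw : prop (cluster' s) =
        (∑ i ∈ N s, (((cluster i).filter (fun j => χ j = h)).card : ℝ)) /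
        (∑ i ∈ N s, ((cluster i).card : ℝ)) := by
      simp only [prop, hcard s, hcardh s]
    rw [hrw]
    exact this
  refine ⟨main, ?_⟩
  intro l u hbound s hs hne
  obtain ⟨hN, hlo, hhi⟩ := main s hs hne
  constructor
  · refine le_trans (Finset.le_inf' hN _ fun i hi => ?_) hlo
    have hi' := Finset.mem_filter.mp hi
    exact (hbound i hi'.1 hi'.2.2).1
  · refine le_trans hhi (Finset.sup'_le hN _ fun i hi => ?_)
    have hi' := Finset.mem_filter.mp hi
    exact (hbound i hi'.1 hi'.2.2).2
end

section
/- Let a, A, ā, Ā, α, Δ, L be real numbers with α ≥ 0, Δ ≥ 0, ā ≤ ⌈a⌉, A ≤ Ā + 1, a ≤ min(α + Δ, 1)·A, and Ā ≥ L > 0. Then ā < (α + Δ)·Ā + 2, and consequently ā / Ā < α + Δ + 2/L. -/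
/-- Rounding increases the upper-proportion violation by less than `2/L`. -/
theorem stmt_4 (a A abar Abar α Δ L : ℝ)
    (hα : 0 ≤ α) (hΔ : 0 ≤ Δ)
    (h1 : abar ≤ (⌈a⌉ : ℝ)) (h2 : A ≤ Abar + 1)
    (h3 : a ≤ min (α + Δ) 1 * A)
    (hLA : L ≤ Abar) (hL : 0 < L) :
    abar < (α + Δ) * Abar + 2 ∧ abar / Abar < α + Δ + 2 / L := by
  have hAbar : 0 < Abar := lt_of_lt_of_le hL hLA
  have hm0 : 0 ≤ min (α + Δ) 1 := le_min (by linarith) zero_le_one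
  have hm1 : min (α + Δ) 1 ≤ 1 := min_le_right _ _
  have hm2 : min (α + Δ) 1 ≤ α + Δ := min_le_left _ _
  have hc : (⌈a⌉ : ℝ) < a + 1 := Int.ceil_lt_add_one a
  have hstep : min (α + Δ) 1 * A ≤ min (α + Δ) 1 * (Abar + 1) :=
    mul_le_mul_of_nonneg_left h2 hm0
  have hmul : min (α + Δ) 1 * Abar ≤ (α + Δ) * Abar :=
    mul_le_mul_of_nonneg_right hm2 hAbar.le
  have key : abar < (α + Δ) * Abar + 2 := by nlinarith
  refine ⟨key, ?_⟩
  rw [div_lt_iff₀ hAbar]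
  have h2L : 2 / L * Abar ≥ 2 := by
    rw [ge_iff_le, div_mul_eq_mul_div, le_div_iff₀ hL]; nlinarith
  nlinarith
end

section
/- Let a, A, ā, Ā, β, Δ, L be real numbers with β ≤ 1, Δ ≥ 0, ā ≥ ⌊a⌋, A ≥ Ā − 1, a ≥ max(β − Δ, 0)·A, and Ā ≥ L > 0. Then ā > (β − Δ)·Ā − 2, and consequently ā / Ā > β − Δ − 2/L. -/
/-- Rounding increases the lower-proportion violation by less than `2/L`. -/
theorem stmt_5 (a A abar Abar β Δ L : ℝ)
    (hβ : β ≤ 1) (hΔ : 0 ≤ Δ)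
    (h1 : (⌊a⌋ : ℝ) ≤ abar) (h2 : Abar - 1 ≤ A)
    (h3 : max (β - Δ) 0 * A ≤ a)
    (hLA : L ≤ Abar) (hL : 0 < L) :
    (β - Δ) * Abar - 2 < abar ∧ β - Δ - 2 / L < abar / Abar := by
  have hA0 : (0:ℝ) < Abar := hL.trans_le hLA
  have hfl : a - 1 < (⌊a⌋ : ℝ) := Int.sub_one_lt_floor a
  have key : (β - Δ) * Abar - 2 < abar := by
    rcases le_or_gt (β - Δ) 0 with h | h
    · have hm : max (β - Δ) 0 = 0 := max_eq_right h
      rw [hm] at h3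
      nlinarith
    · have hm : max (β - Δ) 0 = β - Δ := max_eq_left h.le
      rw [hm] at h3
      nlinarith
  refine ⟨key, ?_⟩
  have h2L : 2 / Abar ≤ 2 / L := by
    apply div_le_div_of_nonneg_left (by norm_num) hL hLA
  have hmid : β - Δ - 2 / Abar < abar / Abar := by
    rw [sub_lt_iff_lt_add, ← add_div, lt_div_iff₀ hA0]
    nlinarith
  linarith
end

section
/- Let r₁, r₂, λ₁, λ₂, p₁, p₂ be real numbers with r₁ + r₂ = 1, p₁ + p₂ = 1, 0 ≤ p₁ ≤ 1, 0 ≤ λ₁ ≤ λ₂, λ₁ ≤ r₁ ≤ 1 − λ₁, and λ₂ ≤ r₂ ≤ 1 − λ₂. For i ∈ {1, 2}, define the violation Δ_i = max(p_i − (r_i + λ_i), (r_i − λ_i) − p_i, 0). Then: if Δ₁ < λ₂ − λ₁ then Δ₂ = 0, and if Δ₁ ≥ λ₂ − λ₁ then Δ₂ = Δ₁ − (λ₂ − λ₁). -/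
/-- Two colors with symmetric proportion bounds: the violation of one color determines
the violation of the other. -/
theorem stmt_8 (r₁ r₂ lam₁ lam₂ p₁ p₂ : ℝ)
    (hr : r₁ + r₂ = 1) (hp : p₁ + p₂ = 1) (hp0 : 0 ≤ p₁) (hp1 : p₁ ≤ 1)
    (hlam0 : 0 ≤ lam₁) (hlam : lam₁ ≤ lam₂)
    (hr1l : lam₁ ≤ r₁) (hr1u : r₁ ≤ 1 - lam₁)
    (hr2l : lam₂ ≤ r₂) (hr2u : r₂ ≤ 1 - lam₂) :
    (max (max (p₁ - (r₁ + lam₁)) ((r₁ - lam₁) - p₁)) 0 < lam₂ - lam₁ →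
      max (max (p₂ - (r₂ + lam₂)) ((r₂ - lam₂) - p₂)) 0 = 0) ∧
    (lam₂ - lam₁ ≤ max (max (p₁ - (r₁ + lam₁)) ((r₁ - lam₁) - p₁)) 0 →
      max (max (p₂ - (r₂ + lam₂)) ((r₂ - lam₂) - p₂)) 0 =
        max (max (p₁ - (r₁ + lam₁)) ((r₁ - lam₁) - p₁)) 0 - (lam₂ - lam₁)) := by
  constructor <;> intro h <;> simp only [max_def] at h ⊢ <;> split_ifs at h ⊢ <;> linarith
end

section
/- There exist finite disjoint sets P_red and P_blue with P = P_red ∪ P_blue, a finite set S of centers, a nonnegative function d : S × P → ℝ, an exponent p ≥ 1, a cost bound U ≥ 0, and proportion bounds β_red, α_red, β_blue, α_blue ∈ [0,1], such that the set of pairs (x, Δ) with x = (x_{ij})_{i∈S, j∈P} ∈ [0,1]^{S×P} and Δ = (Δ_red, Δ_blue) ∈ [0,1]² satisfying (i) ∑_{i∈S, j∈P} d(i,j)^p · x_{ij} ≤ U^p, (ii) ∑_{i∈S} x_{ij} = 1 for every j ∈ P, and (iii) for every i ∈ S and each color h ∈ {red, blue}: (β_h − Δ_h)·(∑_{j∈P}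 x_{ij}) ≤ ∑_{j∈P_h} x_{ij} ≤ (α_h + Δ_h)·(∑_{j∈P} x_{ij}), is NOT a convex subset of ℝ^{S×P} × ℝ². -/
/-- Non-convexity of the fair-assignment-under-a-bounded-cost constraint set: there is
an instance (two colors red/blue partitioning the points, centers `S`, distances `d`,
exponent `p ≥ 1`, cost bound `U`, proportion bounds in `[0,1]`) whose joint constraint
set in the variables `(x, (Δ_red, Δ_blue))` is not convex. -/
theorem stmt_12 :
    ∃ (m n : ℕ) (Pred Pblue : Finset (Fin n)) (d : Fin m → Fin n → ℝ)
      (p U βr αr βb αb : ℝ),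
      Disjoint Pred Pblue ∧ Pred ∪ Pblue = (Finset.univ : Finset (Fin n)) ∧
      (∀ i j, 0 ≤ d i j) ∧ 1 ≤ p ∧ 0 ≤ U ∧
      βr ∈ Set.Icc (0 : ℝ) 1 ∧ αr ∈ Set.Icc (0 : ℝ) 1 ∧
      βb ∈ Set.Icc (0 : ℝ) 1 ∧ αb ∈ Set.Icc (0 : ℝ) 1 ∧
      ¬ Convex ℝ { q : (Fin m → Fin n → ℝ) × ℝ × ℝ |
          (∀ i j, q.1 i j ∈ Set.Icc (0 : ℝ) 1) ∧
          q.2.1 ∈ Set.Icc (0 : ℝ) 1 ∧ q.2.2 ∈ Set.Icc (0 : ℝ) 1 ∧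
          (∑ i, ∑ j, d i j ^ p * q.1 i j) ≤ U ^ p ∧
          (∀ j, ∑ i, q.1 i j = 1) ∧
          (∀ i, (βr - q.2.1) * (∑ j, q.1 i j) ≤ (∑ j ∈ Pred, q.1 i j) ∧
            (∑ j ∈ Pred, q.1 i j) ≤ (αr + q.2.1) * (∑ j, q.1 i j) ∧
            (βb - q.2.2) * (∑ j, q.1 i j) ≤ (∑ j ∈ Pblue, q.1 i j) ∧
            (∑ j ∈ Pblue, q.1 i j) ≤ (αb + q.2.2) * (∑ j, q.1 i j)) } := by
  refine ⟨2, 2, {0}, {1}, fun _ _ => 0, 1, 0, 1/2, 1/2, 1/2, 1/2,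
    by decide, by decide, fun _ _ => le_refl 0, le_refl 1, le_refl 0,
    by norm_num, by norm_num, by norm_num, by norm_num, ?_⟩
  intro hconv
  -- point A: center 0 gets both points, Δ = (0,0)
  set qA : (Fin 2 → Fin 2 → ℝ) × ℝ × ℝ :=
    ⟨fun i _ => if i = 0 then 1 else 0, 0, 0⟩ with hqA
  -- point B: center j gets point j, Δ = (1/2, 1/2)
  set qB : (Fin 2 → Fin 2 → ℝ) × ℝ × ℝ :=
    ⟨fun i j => if i = j then 1 else 0, 1/2, 1/2⟩ with hqB
  have hA : qA ∈ { q : (Fin 2 → Fin 2 → ℝ) × ℝ × ℝ |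
          (∀ i j, q.1 i j ∈ Set.Icc (0 : ℝ) 1) ∧
          q.2.1 ∈ Set.Icc (0 : ℝ) 1 ∧ q.2.2 ∈ Set.Icc (0 : ℝ) 1 ∧
          (∑ i, ∑ j, (0:ℝ) ^ (1:ℝ) * q.1 i j) ≤ (0:ℝ) ^ (1:ℝ) ∧
          (∀ j, ∑ i, q.1 i j = 1) ∧
          (∀ i, (1/2 - q.2.1) * (∑ j, q.1 i j) ≤ (∑ j ∈ ({0}:Finset (Fin 2)), q.1 i j) ∧
            (∑ j ∈ ({0}:Finset (Fin 2)), q.1 i j) ≤ (1/2 + q.2.1) * (∑ j, q.1 i j) ∧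
            (1/2 - q.2.2) * (∑ j, q.1 i j) ≤ (∑ j ∈ ({1}:Finset (Fin 2)), q.1 i j) ∧
            (∑ j ∈ ({1}:Finset (Fin 2)), q.1 i j) ≤ (1/2 + q.2.2) * (∑ j, q.1 i j)) } := by
    refine ⟨fun i j => ?_, by norm_num, by norm_num, ?_, fun j => ?_, fun i => ?_⟩
    · by_cases h : i = 0 <;> simp [hqA, h]
    · simp [hqA, Fin.sum_univ_two]
    · simp [hqA, Fin.sum_univ_two]
    · fin_cases i <;> simp [hqA, Fin.sum_univ_two] <;> norm_num
  have hB : qB ∈ { q : (Fin 2 → Fin 2 → ℝ) × ℝ × ℝ |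
          (∀ i j, q.1 i j ∈ Set.Icc (0 : ℝ) 1) ∧
          q.2.1 ∈ Set.Icc (0 : ℝ) 1 ∧ q.2.2 ∈ Set.Icc (0 : ℝ) 1 ∧
          (∑ i, ∑ j, (0:ℝ) ^ (1:ℝ) * q.1 i j) ≤ (0:ℝ) ^ (1:ℝ) ∧
          (∀ j, ∑ i, q.1 i j = 1) ∧
          (∀ i, (1/2 - q.2.1) * (∑ j, q.1 i j) ≤ (∑ j ∈ ({0}:Finset (Fin 2)), q.1 i j) ∧
            (∑ j ∈ ({0}:Finset (Fin 2)), q.1 i j) ≤ (1/2 + q.2.1) * (∑ j, q.1 i j) ∧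
            (1/2 - q.2.2) * (∑ j, q.1 i j) ≤ (∑ j ∈ ({1}:Finset (Fin 2)), q.1 i j) ∧
            (∑ j ∈ ({1}:Finset (Fin 2)), q.1 i j) ≤ (1/2 + q.2.2) * (∑ j, q.1 i j)) } := by
    refine ⟨fun i j => ?_, by norm_num, by norm_num, ?_, fun j => ?_, fun i => ?_⟩
    · by_cases h : i = j <;> simp [hqB, h]
    · simp [hqB, Fin.sum_univ_two]
    · fin_cases j <;> simp [hqB, Fin.sum_univ_two] <;> norm_num
    · fin_cases i <;> simp [hqB, Fin.sum_univ_two] <;> norm_num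
  have hmid := hconv hA hB (by norm_num : (0:ℝ) ≤ 1/2)
    (by norm_num : (0:ℝ) ≤ 1/2) (by norm_num)
  obtain ⟨_, _, _, _, _, hfair⟩ := hmid
  have h1 := (hfair 1).1
  simp only [Prod.fst_add, Prod.snd_add, Prod.smul_fst, Prod.smul_snd,
    Fin.sum_univ_two] at h1
  simp [hqA, hqB, Fin.sum_univ_two] at h1
  norm_num at h1
end

section
/- Let S and P be finite sets, H a finite set of colors, χ : P → H, and c : S × P → ℝ with c(i,j) ≥ 0 for all (i,j). Let x = (x_{ij}) ∈ [0,1]^{S×P} satisfy ∑_{i∈S} x_{ij} = 1 for every j ∈ P. Then there exists x̄ = (x̄_{ij}) ∈ {0,1}^{S×P} such that: (i) ∑_{i∈S} x̄_{ij} = 1 for every j ∈ P; (ii) ∑_{i∈S, j∈P} c(i,j)·x̄_{ij} ≤ ∑_{i∈S, j∈P} c(i,j)·x_{ij}; (iii) for every i ∈ S, ⌊∑_{j∈P} x_{ij}⌋ ≤ ∑_{j∈P} x̄_{ij} ≤ ⌈∑_{j∈P} x_{ij}⌉; and (iv) for every i ∈ S and h ∈ H, ⌊∑_{j∈P, χ(j)=h}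 x_{ij}⌋ ≤ ∑_{j∈P, χ(j)=h} x̄_{ij} ≤ ⌈∑_{j∈P, χ(j)=h} x_{ij}⌉. -/
open Finset

theorem circulation_exists {V E : Type*} [Fintype V] [DecidableEq V] [Fintype E]
    (tail head : E → V) (e₀ : E)
    (hdeg : ∀ v e, tail e = v ∨ head e = v → ∃ e', e' ≠ e ∧ (tail e' = v ∨ head e' = v)) :
    ∃ d : E → ℝ, d ≠ 0 ∧ (∀ e, d e = 0 ∨ d e = 1 ∨ d e = -1) ∧
      ∀ v : V, ∑ e : E, ((if head e = v then (1 : ℝ) else 0) -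
        (if tail e = v then (1 : ℝ) else 0)) * d e = 0 := by
  classical
  have hstep : ∀ p : E × Bool, ∃ q : E × Bool, q.1 ≠ p.1 ∧
      (if q.2 then tail q.1 else head q.1) = (if p.2 then head p.1 else tail p.1) := by
    intro p
    obtain ⟨e', he1, he2⟩ := hdeg (if p.2 then head p.1 else tail p.1) p.1
      (by by_cases h : p.2 <;> simp [h])
    rcases he2 with h | h
    · exact ⟨(e', true), he1, by simpa using h⟩
    · exact ⟨(e', false), he1, by simpa using h⟩
  choose nxt hnxt1 hnxt2 using hstep
  let w : ℕ → E × Bool := fun n => n.rec (e₀, true) fun _ p => nxt p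
  have hw : ∀ n, w (n + 1) = nxt (w n) := fun n => rfl
  set v : ℕ → V := fun n => if (w n).2 then head (w n).1 else tail (w n).1 with hv
  have hst : ∀ n, (if (w (n+1)).2 then tail (w (n+1)).1 else head (w (n+1)).1) = v n := by
    intro n; rw [hw]; exact hnxt2 (w n)
  have hene : ∀ n, (w (n+1)).1 ≠ (w n).1 := fun n => by rw [hw]; exact hnxt1 (w n)
  -- tail/head of edge m+1 in terms of v
  have hth : ∀ n, (tail (w (n+1)).1 = (if (w (n+1)).2 then v n else v (n+1)))
      ∧ (head (w (n+1)).1 = (if (w (n+1)).2 then v (n+1) else v n)) := by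
    intro n
    have h1 := hst n
    by_cases hb : (w (n+1)).2
    · constructor
      · rw [if_pos hb]; rw [if_pos hb] at h1; exact h1
      · rw [if_pos hb]; rw [hv]; simp only [hb, if_pos]
    · constructor
      · rw [if_neg hb]; rw [hv]; simp only [hb]; simp
      · rw [if_neg hb]; rw [if_neg hb] at h1; exact h1
  have hex : ∃ l, ∃ k, k < l ∧ v k = v l := by
    obtain ⟨a, b, hab, hvab⟩ := Fintype.exists_ne_map_eq_of_card_lt
      (fun m : Fin (Fintype.card V + 1) => v m) (by simp)
    rcases lt_or_gt_of_ne (fun h => hab (Fin.ext h)) with h | h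
    · exact ⟨b, a, h, hvab⟩
    · exact ⟨a, b, h, hvab.symm⟩
  obtain ⟨k, hkl, hvkl⟩ : ∃ k, k < Nat.find hex ∧ v k = v (Nat.find hex) := Nat.find_spec hex
  set l := Nat.find hex with hldef
  have hmin : ∀ a b, a < b → b < l → v a ≠ v b := by
    intro a b hab hbl hvab
    exact Nat.find_min hex hbl ⟨a, hab, hvab⟩
  -- injectivity on [k, l]
  have hinj : ∀ a b, k ≤ a → a ≤ l → k ≤ b → b ≤ l → v a = v b →
      a = b ∨ (a = k ∧ b = l) ∨ (a = l ∧ b = k) := by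
    intro a b hka hal hkb hbl hvab
    rcases lt_trichotomy a b with h | h | h
    · rcases lt_or_eq_of_le hbl with h2 | h2
      · exact absurd hvab (hmin a b h h2)
      · subst h2
        rcases lt_or_eq_of_le hka with h3 | h3
        · exact absurd (hvab.trans hvkl.symm).symm (hmin k a h3 (lt_of_lt_of_le h hbl))
        · exact Or.inr (Or.inl ⟨h3.symm, rfl⟩)
    · exact Or.inl h
    · rcases lt_or_eq_of_le hal with h2 | h2
      · exact absurd hvab.symm (hmin b a h h2)
      · subst h2
        rcases lt_or_eq_of_le hkb with h3 | h3
        · exact absurd (hvab.symm.trans hvkl.symm).symm (hmin k b h3 h)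
        · exact Or.inr (Or.inr ⟨rfl, h3.symm⟩)
  have hkl1 : k + 1 ≤ l := hkl
  -- edge distinctness on the cycle
  have hedist : ∀ m m', k + 1 ≤ m → m ≤ l → k + 1 ≤ m' → m' ≤ l →
      (w m).1 = (w m').1 → m = m' := by
    intro m m' hm1 hm2 hm'1 hm'2 hee
    obtain ⟨a, ha⟩ : ∃ a, m = a + 1 := ⟨m - 1, by omega⟩
    obtain ⟨b, hb⟩ : ∃ b, m' = b + 1 := ⟨m' - 1, by omega⟩
    subst ha; subst hb
    have hta := (hth a).1
    have hha := (hth a).2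
    have htb := (hth b).1
    have hhb := (hth b).2
    rw [hee] at hta hha
    by_cases hba : (w (a+1)).2 <;> by_cases hbb : (w (b+1)).2
    · -- same orientation true/true : v a = v b
      rw [if_pos hba] at hta; rw [if_pos hbb] at htb
      have : v a = v b := hta.symm.trans htb
      rcases hinj a b (by omega) (by omega) (by omega) (by omega) this with h | h | h
      · omega
      · -- a = k, b = l: impossible since b ≤ l - 1
        omega
      · omega
    · -- opposite: tail: v a = v (b+1), head: v (a+1) = v b
      rw [if_pos hba] at hta hha; rw [if_neg hbb] at htb hhb
      have h1 : v a = v (b+1) := hta.symm.trans htb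
      have h2 : v (a+1) = v b := hha.symm.trans hhb
      rcases hinj a (b+1) (by omega) (by omega) (by omega) (by omega) h1 with g1 | g1 | g1
      · rcases hinj (a+1) b (by omega) (by omega) (by omega) (by omega) h2 with g2 | g2 | g2
        · omega
        · -- a+1 = k impossible
          omega
        · -- a + 1 = l, b = k
          exfalso
          have hab : a = b + 1 := g1
          subst hab
          exact hene (b+1) hee
      · -- a = k , b + 1 = l
        rcases hinj (a+1) b (by omega) (by omega) (by omega) (by omega) h2 with g2 | g2 | g2
        · exfalso
          have hab : b = a + 1 := g2.symm
          subst hab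
          exact hene (a+1) hee.symm
        · omega
        · omega
      · omega
    · -- symmetric opposite
      rw [if_neg hba] at hta hha; rw [if_pos hbb] at htb hhb
      have h1 : v (a+1) = v b := hta.symm.trans htb
      have h2 : v a = v (b+1) := hha.symm.trans hhb
      rcases hinj a (b+1) (by omega) (by omega) (by omega) (by omega) h2 with g1 | g1 | g1
      · rcases hinj (a+1) b (by omega) (by omega) (by omega) (by omega) h1 with g2 | g2 | g2
        · omega
        · omega
        · exfalso
          have hab : a = b + 1 := by omega
          subst hab
          exact hene (b+1) hee
      · rcases hinj (a+1) b (by omega) (by omega) (by omega) (by omega) h1 with g2 | g2 | g2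
        · exfalso
          have hab : b = a + 1 := by omega
          subst hab
          exact hene (a+1) hee.symm
        · omega
        · omega
      · omega
    · rw [if_neg hba] at hta; rw [if_neg hbb] at htb
      have : v (a+1) = v (b+1) := hta.symm.trans htb
      rcases hinj (a+1) (b+1) (by omega) (by omega) (by omega) (by omega) this with h | h | h
      · omega
      · omega
      · omega
  set σ : ℕ → ℝ := fun m => if (w m).2 then 1 else -1 with hσ
  have hσne : ∀ m, σ m ≠ 0 := by
    intro m; rw [hσ]; by_cases h : (w m).2 <;> simp [h]
  have hσ01 : ∀ m, σ m = 1 ∨ σ m = -1 := by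
    intro m; rw [hσ]; by_cases h : (w m).2 <;> simp [h]
  set d : E → ℝ := fun e => ∑ m ∈ Finset.Ico (k+1) (l+1), if (w m).1 = e then σ m else 0
    with hd
  refine ⟨d, ?_, ?_, ?_⟩
  · -- d ≠ 0
    intro h0
    have h1 : d ((w l).1) = σ l := by
      simp only [hd]
      rw [Finset.sum_eq_single_of_mem l (by simp [Finset.mem_Ico]; omega)]
      · rw [if_pos rfl]
      · intro b hb hbne
        rw [Finset.mem_Ico] at hb
        rw [if_neg]
        intro hc
        exact hbne (hedist b l hb.1 (by omega) (by omega) le_rfl hc)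
    rw [h0] at h1
    exact hσne l h1.symm
  · -- values
    intro e
    by_cases hexm : ∃ m ∈ Finset.Ico (k+1) (l+1), (w m).1 = e
    · obtain ⟨m, hm, hme⟩ := hexm
      rw [Finset.mem_Ico] at hm
      have : d e = σ m := by
        simp only [hd]
        rw [Finset.sum_eq_single_of_mem m (by simp [Finset.mem_Ico]; omega)]
        · rw [if_pos hme]
        · intro b hb hbne
          rw [Finset.mem_Ico] at hb
          rw [if_neg]
          intro hc
          exact hbne (hedist b m hb.1 (by omega) (by omega) (by omega) (hc.trans hme.symm))
      rw [this]
      rcases hσ01 m with h | h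
      · exact Or.inr (Or.inl h)
      · exact Or.inr (Or.inr h)
    · push_neg at hexm
      have : d e = 0 := by
        simp only [hd]
        apply Finset.sum_eq_zero
        intro m hm
        rw [if_neg (hexm m hm)]
      exact Or.inl this
  · -- conservation
    intro u
    have hswap : ∑ e : E, ((if head e = u then (1 : ℝ) else 0) -
        (if tail e = u then (1 : ℝ) else 0)) * d e
        = ∑ m ∈ Finset.Ico (k+1) (l+1),
            ((if head (w m).1 = u then (1 : ℝ) else 0) -
             (if tail (w m).1 = u then (1 : ℝ) else 0)) * σ m := by
      simp only [hd, Finset.mul_sum]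
      rw [Finset.sum_comm]
      apply Finset.sum_congr rfl
      intro m _
      rw [Finset.sum_eq_single_of_mem ((w m).1) (Finset.mem_univ _)]
      · rw [if_pos rfl]
      · intro b _ hbne
        rw [if_neg (show ¬((w m).1 = b) from fun hc => hbne hc.symm), mul_zero]
    rw [hswap]
    have hterm : ∀ m ∈ Finset.Ico (k+1) (l+1),
        ((if head (w m).1 = u then (1 : ℝ) else 0) -
         (if tail (w m).1 = u then (1 : ℝ) else 0)) * σ m
        = (if v m = u then (1:ℝ) else 0) - (if v (m-1) = u then (1:ℝ) else 0) := by
      intro m hm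
      rw [Finset.mem_Ico] at hm
      obtain ⟨a, ha⟩ : ∃ a, m = a + 1 := ⟨m - 1, by omega⟩
      subst ha
      have hta := (hth a).1
      have hha := (hth a).2
      simp only [Nat.add_sub_cancel]
      by_cases hb : (w (a+1)).2
      · rw [if_pos hb] at hta hha
        rw [hta, hha, hσ]
        simp only [hb, if_pos]
        ring
      · rw [if_neg hb] at hta hha
        rw [hta, hha, hσ]
        simp only [hb]
        simp only [Bool.false_eq_true, if_false]
        ring
    rw [Finset.sum_congr rfl hterm]
    rw [Finset.sum_Ico_eq_sum_range]
    have hre : ∀ i ∈ Finset.range (l + 1 - (k+1)),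
        (if v (k + 1 + i) = u then (1:ℝ) else 0) - (if v (k + 1 + i - 1) = u then (1:ℝ) else 0)
        = (fun n => if v (k + n) = u then (1:ℝ) else 0) (i+1)
          - (fun n => if v (k + n) = u then (1:ℝ) else 0) i := by
      intro i _
      simp only []
      have e2 : k + 1 + i - 1 = k + i := by omega
      have e1 : k + 1 + i = k + (i+1) := by omega
      rw [e2, e1]
    rw [Finset.sum_congr rfl hre, Finset.sum_range_sub (fun n => if v (k + n) = u then (1:ℝ) else 0)]
    have e3 : k + (l + 1 - (k+1)) = l := by omega
    simp only [e3, Nat.add_zero]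
    simp only [hvkl]
    ring

def IsIntR (r : ℝ) : Prop := ∃ n : ℤ, r = (n : ℝ)

lemma isIntR_sum {α : Type*} (s : Finset α) (f : α → ℝ) (h : ∀ a ∈ s, IsIntR (f a)) :
    IsIntR (∑ a ∈ s, f a) := by
  classical
  induction s using Finset.induction_on with
  | empty => exact ⟨0, by simp⟩
  | @insert a s' hns ih =>
    obtain ⟨n, hn⟩ := h a (Finset.mem_insert_self a s')
    obtain ⟨m, hm⟩ := ih (fun b hb => h b (Finset.mem_insert_of_mem hb))
    exact ⟨n + m, by rw [Finset.sum_insert hns, hn, hm]; push_cast; ring⟩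

lemma isIntR_sub {a b : ℝ} (ha : IsIntR a) (hb : IsIntR b) : IsIntR (a - b) := by
  obtain ⟨n, hn⟩ := ha; obtain ⟨m, hm⟩ := hb
  exact ⟨n - m, by rw [hn, hm]; push_cast; ring⟩

lemma exists_notInt_second {α : Type*} [DecidableEq α] (s : Finset α) (f : α → ℝ)
    (hs : IsIntR (∑ a ∈ s, f a)) {a : α} (ha : a ∈ s) (hfa : ¬ IsIntR (f a)) :
    ∃ b ∈ s, b ≠ a ∧ ¬ IsIntR (f b) := by
  by_contra hcon
  push_neg at hcon
  have h1 : IsIntR (∑ b ∈ s.erase a, f b) :=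
    isIntR_sum _ _ (fun b hb => hcon b (Finset.mem_of_mem_erase hb) (Finset.ne_of_mem_erase hb))
  have h2 : f a = (∑ b ∈ s, f b) - (∑ b ∈ s.erase a, f b) := by
    rw [← Finset.add_sum_erase s f ha]; ring
  exact hfa (h2 ▸ isIntR_sub hs h1)

lemma exists_notInt_mem {α : Type*} (s : Finset α) (f : α → ℝ)
    (hs : ¬ IsIntR (∑ a ∈ s, f a)) : ∃ a ∈ s, ¬ IsIntR (f a) := by
  by_contra hcon
  push_neg at hcon
  exact hs (isIntR_sum _ _ hcon)

lemma notInt_of_strict {a r : ℝ} (h1 : (⌊a⌋ : ℝ) < r) (h2 : r < (⌈a⌉ : ℝ)) : ¬ IsIntR r := by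
  rintro ⟨n, rfl⟩
  have hc : (⌈a⌉ : ℝ) ≤ (⌊a⌋ : ℝ) + 1 := by
    have := Int.ceil_le_floor_add_one a
    exact_mod_cast this
  have g1 : ⌊a⌋ < n := by exact_mod_cast h1
  have g2 : (n : ℝ) < (⌊a⌋ : ℝ) + 1 := lt_of_lt_of_le h2 hc
  have g2' : n < ⌊a⌋ + 1 := by exact_mod_cast g2
  omega

lemma strict_of_notInt {a r : ℝ} (h1 : (⌊a⌋ : ℝ) ≤ r) (h2 : r ≤ (⌈a⌉ : ℝ))
    (h : ¬ IsIntR r) : (⌊a⌋ : ℝ) < r ∧ r < (⌈a⌉ : ℝ) := by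
  constructor
  · rcases lt_or_eq_of_le h1 with h' | h'
    · exact h'
    · exact absurd ⟨⌊a⌋, h'.symm⟩ h
  · rcases lt_or_eq_of_le h2 with h' | h'
    · exact h'
    · exact absurd ⟨⌈a⌉, h'⟩ h

lemma isInt_of_not_strict {a r : ℝ} (h1 : (⌊a⌋ : ℝ) ≤ r) (h2 : r ≤ (⌈a⌉ : ℝ))
    (h : ¬ ((⌊a⌋ : ℝ) < r ∧ r < (⌈a⌉ : ℝ))) : IsIntR r := by
  by_contra hcon
  exact h (strict_of_notInt h1 h2 hcon)

lemma notInt_of_frac {r : ℝ} (h1 : 0 < r) (h2 : r < 1) : ¬ IsIntR r := by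
  rintro ⟨n, rfl⟩
  have g1 : 0 < n := by exact_mod_cast h1
  have g2 : n < 1 := by exact_mod_cast h2
  omega

lemma frac_of_notInt {r : ℝ} (h1 : 0 ≤ r) (h2 : r ≤ 1) (h : ¬ IsIntR r) : 0 < r ∧ r < 1 := by
  constructor
  · rcases lt_or_eq_of_le h1 with h' | h'
    · exact h'
    · exact absurd ⟨0, by simp [← h']⟩ h
  · rcases lt_or_eq_of_le h2 with h' | h'
    · exact h'
    · exact absurd ⟨1, by simp [h']⟩ h

section Main

variable {S P H : Type*} [Fintype S] [Fintype P] [Fintype H] [DecidableEq H]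

def gS (χ : P → H) (y : S → P → ℝ) (i : S) (h : H) : ℝ :=
  ∑ j ∈ Finset.univ.filter (fun j => χ j = h), y i j

def tS (y : S → P → ℝ) (i : S) : ℝ := ∑ j, y i j

open Classical in
noncomputable def fracSet (y : S → P → ℝ) : Finset (S × P) :=
  Finset.univ.filter (fun p => 0 < y p.1 p.2 ∧ y p.1 p.2 < 1)

open Classical in
noncomputable def intGrp (χ : P → H) (x y : S → P → ℝ) : Finset (S × H) :=
  Finset.univ.filter (fun q => (⌊gS χ x q.1 q.2⌋ : ℝ) < gS χ y q.1 q.2 ∧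
    gS χ y q.1 q.2 < (⌈gS χ x q.1 q.2⌉ : ℝ))

open Classical in
noncomputable def intCl (x y : S → P → ℝ) : Finset S :=
  Finset.univ.filter (fun i => (⌊tS x i⌋ : ℝ) < tS y i ∧ tS y i < (⌈tS x i⌉ : ℝ))

noncomputable def Msr (χ : P → H) (x y : S → P → ℝ) : ℕ :=
  (fracSet y).card + (intGrp χ x y).card + (intCl x y).card

-- feasibility package
def Feas (χ : P → H) (c : S → P → ℝ) (x y : S → P → ℝ) : Prop :=
  (∀ i j, 0 ≤ y i j ∧ y i j ≤ 1) ∧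
  (∀ j, ∑ i, y i j = 1) ∧
  (∀ i h, (⌊gS χ x i h⌋ : ℝ) ≤ gS χ y i h ∧ gS χ y i h ≤ (⌈gS χ x i h⌉ : ℝ)) ∧
  (∀ i, (⌊tS x i⌋ : ℝ) ≤ tS y i ∧ tS y i ≤ (⌈tS x i⌉ : ℝ)) ∧
  (∑ i, ∑ j, c i j * y i j) ≤ (∑ i, ∑ j, c i j * x i j)

set_option maxHeartbeats 1000000 in
theorem step_lemma (χ : P → H) (c : S → P → ℝ) (x y : S → P → ℝ)
    (hy : Feas χ c x y) (hfr : (fracSet y).Nonempty) :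
    ∃ y', Feas χ c x y' ∧ Msr χ x y' < Msr χ x y := by
  classical
  obtain ⟨hbox, hcol, hgrp, hcl, hcost⟩ := hy
  have hFmem : ∀ (z : S → P → ℝ) (p : S × P),
      p ∈ fracSet z ↔ (0 < z p.1 p.2 ∧ z p.1 p.2 < 1) := by
    intro z p; unfold fracSet; simp
  have hGmem : ∀ (z : S → P → ℝ) (q : S × H), q ∈ intGrp χ x z ↔
      ((⌊gS χ x q.1 q.2⌋ : ℝ) < gS χ z q.1 q.2 ∧ gS χ z q.1 q.2 < (⌈gS χ x q.1 q.2⌉ : ℝ)) := by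
    intro z q; unfold intGrp; simp
  have hCmem : ∀ (z : S → P → ℝ) (i : S), i ∈ intCl x z ↔
      ((⌊tS x i⌋ : ℝ) < tS z i ∧ tS z i < (⌈tS x i⌉ : ℝ)) := by
    intro z i; unfold intCl; simp
  -- integer/fractional facts
  have hF_notint : ∀ p ∈ fracSet y, ¬ IsIntR (y p.1 p.2) := by
    intro p hp
    rw [hFmem] at hp
    exact notInt_of_frac hp.1 hp.2
  have hF_of_notint : ∀ i j, ¬ IsIntR (y i j) → (i, j) ∈ fracSet y := by
    intro i j hni
    rw [hFmem]
    exact frac_of_notInt (hbox i j).1 (hbox i j).2 hni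
  have hG_notint : ∀ q ∈ intGrp χ x y, ¬ IsIntR (gS χ y q.1 q.2) := by
    intro q hq
    rw [hGmem] at hq
    exact notInt_of_strict hq.1 hq.2
  have hG_int_of_not : ∀ i h, (i, h) ∉ intGrp χ x y → IsIntR (gS χ y i h) := by
    intro i h hn
    refine isInt_of_not_strict (hgrp i h).1 (hgrp i h).2 ?_
    rw [hGmem] at hn; exact hn
  have hG_of_notint : ∀ i h, ¬ IsIntR (gS χ y i h) → (i, h) ∈ intGrp χ x y := by
    intro i h hni
    rw [hGmem]
    exact strict_of_notInt (hgrp i h).1 (hgrp i h).2 hni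
  have hC_notint : ∀ i, i ∈ intCl x y → ¬ IsIntR (tS y i) := by
    intro i hi
    rw [hCmem] at hi
    exact notInt_of_strict hi.1 hi.2
  have hC_int_of_not : ∀ i, i ∉ intCl x y → IsIntR (tS y i) := by
    intro i hn
    refine isInt_of_not_strict (hcl i).1 (hcl i).2 ?_
    rw [hCmem] at hn; exact hn
  have hC_of_notint : ∀ i, ¬ IsIntR (tS y i) → i ∈ intCl x y := by
    intro i hni
    rw [hCmem]
    exact strict_of_notInt (hcl i).1 (hcl i).2 hni
  have htg : ∀ (z : S → P → ℝ) (i : S), tS z i = ∑ h, gS χ z i h := by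
    intro z i
    unfold tS gS
    exact (Finset.sum_fiberwise Finset.univ χ (z i)).symm
  -- the graph
  have hgj : ∀ j, IsIntR (∑ i, y i j) := fun j => ⟨1, by rw [hcol j]; norm_num⟩
  have hgsum : IsIntR (∑ i, tS y i) := by
    refine ⟨(Fintype.card P : ℤ), ?_⟩
    unfold tS
    rw [Finset.sum_comm]
    simp only [hcol]
    simp [Finset.card_univ]
  -- the graph
  let EE := ↥(fracSet y) ⊕ ↥(intGrp χ x y) ⊕ ↥(intCl x y)
  let VV := P ⊕ (S × H) ⊕ S ⊕ Unit
  let tl : EE → VV := Sum.elim (fun p => Sum.inl (p.1).2)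
    (Sum.elim (fun q => Sum.inr (Sum.inl q.1)) (fun r => Sum.inr (Sum.inr (Sum.inl r.1))))
  let hdE : EE → VV := Sum.elim (fun p => Sum.inr (Sum.inl ((p.1).1, χ (p.1).2)))
    (Sum.elim (fun q => Sum.inr (Sum.inr (Sum.inl q.1.1)))
      (fun _ => Sum.inr (Sum.inr (Sum.inr ()))))
  have hdeg : ∀ (v : VV) (e : EE), tl e = v ∨ hdE e = v →
      ∃ e', e' ≠ e ∧ (tl e' = v ∨ hdE e' = v) := by
    rintro v (⟨⟨i, j⟩, hp⟩ | ⟨⟨i, h⟩, hq⟩ | ⟨i, hi⟩) hinc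
    · -- F-edge
      rcases hinc with hv | hv
      · -- v = point j
        obtain ⟨i', hi'mem, hi'ne, hi'ni⟩ :
            ∃ i' ∈ (Finset.univ : Finset S), i' ≠ i ∧ ¬ IsIntR (y i' j) := by
          exact exists_notInt_second Finset.univ (fun i' => y i' j) (hgj j)
            (Finset.mem_univ i) (hF_notint (i, j) hp)
        refine ⟨Sum.inl ⟨(i', j), hF_of_notint i' j hi'ni⟩, ?_, Or.inl hv⟩
        intro hcon
        rw [Sum.inl.injEq, Subtype.mk.injEq, Prod.mk.injEq] at hcon
        exact hi'ne hcon.1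
      · -- v = group (i, χ j)
        by_cases hmem : (i, χ j) ∈ intGrp χ x y
        · exact ⟨Sum.inr (Sum.inl ⟨(i, χ j), hmem⟩), by simp, Or.inl hv⟩
        · have hint : IsIntR (gS χ y i (χ j)) := hG_int_of_not i (χ j) hmem
          obtain ⟨j', hj'mem, hj'ne, hj'ni⟩ :
              ∃ j' ∈ Finset.univ.filter (fun j' => χ j' = χ j), j' ≠ j ∧ ¬ IsIntR (y i j') := by
            refine exists_notInt_second _ (fun j' => y i j') hint ?_ (hF_notint (i, j) hp)
            simp
          refine ⟨Sum.inl ⟨(i, j'), hF_of_notint i j' hj'ni⟩, ?_, Or.inr ?_⟩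
          · intro hcon
            rw [Sum.inl.injEq, Subtype.mk.injEq, Prod.mk.injEq] at hcon
            exact hj'ne hcon.2
          · simp only [Finset.mem_filter] at hj'mem
            show Sum.inr (Sum.inl (i, χ j')) = v
            rw [hj'mem.2]
            exact hv
    · -- slack edge (i, h)
      rcases hinc with hv | hv
      · -- v = group (i, h)
        have hni := hG_notint (i, h) hq
        obtain ⟨j, hjmem, hjni⟩ :
            ∃ j ∈ Finset.univ.filter (fun j => χ j = h), ¬ IsIntR (y i j) :=
          exists_notInt_mem _ (fun j => y i j) hni
        simp only [Finset.mem_filter] at hjmem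
        refine ⟨Sum.inl ⟨(i, j), hF_of_notint i j hjni⟩, by simp, Or.inr ?_⟩
        show Sum.inr (Sum.inl (i, χ j)) = v
        rw [hjmem.2]
        exact hv
      · -- v = cluster i
        by_cases hmem : i ∈ intCl x y
        · exact ⟨Sum.inr (Sum.inr ⟨i, hmem⟩),
            by intro hcon; injection hcon with h1; injection h1, Or.inl hv⟩
        · have hint : IsIntR (tS y i) := hC_int_of_not i hmem
          rw [htg] at hint
          have hqni : ¬ IsIntR (gS χ y i h) := hG_notint (i, h) hq
          obtain ⟨h', hh'mem, hh'ne, hh'ni⟩ :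
              ∃ h' ∈ (Finset.univ : Finset H), h' ≠ h ∧ ¬ IsIntR (gS χ y i h') :=
            exists_notInt_second Finset.univ (fun h' => gS χ y i h') hint
              (Finset.mem_univ h) hqni
          refine ⟨Sum.inr (Sum.inl ⟨(i, h'), hG_of_notint i h' hh'ni⟩), ?_, Or.inr hv⟩
          intro hcon
          rw [Sum.inr.injEq, Sum.inl.injEq, Subtype.mk.injEq, Prod.mk.injEq] at hcon
          exact hh'ne hcon.2
    · -- root edge i
      rcases hinc with hv | hv
      · -- v = cluster i
        have hni := hC_notint i hi
        rw [htg] at hni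
        obtain ⟨h, _, hhni⟩ : ∃ h ∈ (Finset.univ : Finset H), ¬ IsIntR (gS χ y i h) :=
          exists_notInt_mem _ (fun h => gS χ y i h) hni
        exact ⟨Sum.inr (Sum.inl ⟨(i, h), hG_of_notint i h hhni⟩),
          by intro hcon; injection hcon with h1; injection h1, Or.inr hv⟩
      · -- v = root
        obtain ⟨i', _, hi'ne, hi'ni⟩ :
            ∃ i' ∈ (Finset.univ : Finset S), i' ≠ i ∧ ¬ IsIntR (tS y i') :=
          exists_notInt_second Finset.univ (fun i' => tS y i') hgsum
            (Finset.mem_univ i) (hC_notint i hi)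
        refine ⟨Sum.inr (Sum.inr ⟨i', hC_of_notint i' hi'ni⟩), ?_, Or.inr hv⟩
        intro hcon
        rw [Sum.inr.injEq, Sum.inr.injEq, Subtype.mk.injEq] at hcon
        exact hi'ne hcon
  obtain ⟨d, hdne, hd01, hcons⟩ := circulation_exists tl hdE
    (Sum.inl ⟨hfr.choose, hfr.choose_spec⟩) hdeg
  -- extended edge values
  let D1 : S × P → ℝ := fun p => if hm : p ∈ fracSet y then d (Sum.inl ⟨p, hm⟩) else 0
  let D2 : S × H → ℝ := fun q => if hm : q ∈ intGrp χ x y then d (Sum.inr (Sum.inl ⟨q, hm⟩)) else 0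
  let D3 : S → ℝ := fun r => if hm : r ∈ intCl x y then d (Sum.inr (Sum.inr ⟨r, hm⟩)) else 0
  have hD1z : ∀ p, p ∉ fracSet y → D1 p = 0 := fun p hm => dif_neg hm
  have hD2z : ∀ q, q ∉ intGrp χ x y → D2 q = 0 := fun q hm => dif_neg hm
  have hD3z : ∀ r, r ∉ intCl x y → D3 r = 0 := fun r hm => dif_neg hm
  have hD1val : ∀ p (hm : p ∈ fracSet y), D1 p = d (Sum.inl ⟨p, hm⟩) := fun p hm => dif_pos hm
  have hD2val : ∀ q (hm : q ∈ intGrp χ x y), D2 q = d (Sum.inr (Sum.inl ⟨q, hm⟩)) :=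
    fun q hm => dif_pos hm
  have hD3val : ∀ r (hm : r ∈ intCl x y), D3 r = d (Sum.inr (Sum.inr ⟨r, hm⟩)) :=
    fun r hm => dif_pos hm
  have hD101 : ∀ p, D1 p = 0 ∨ D1 p = 1 ∨ D1 p = -1 := by
    intro p
    by_cases hm : p ∈ fracSet y
    · rw [hD1val p hm]; exact hd01 _
    · exact Or.inl (hD1z p hm)
  have hD201 : ∀ q, D2 q = 0 ∨ D2 q = 1 ∨ D2 q = -1 := by
    intro q
    by_cases hm : q ∈ intGrp χ x y
    · rw [hD2val q hm]; exact hd01 _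
    · exact Or.inl (hD2z q hm)
  have hD301 : ∀ r, D3 r = 0 ∨ D3 r = 1 ∨ D3 r = -1 := by
    intro r
    by_cases hm : r ∈ intCl x y
    · rw [hD3val r hm]; exact hd01 _
    · exact Or.inl (hD3z r hm)
  -- decomposition of sums over EE
  have hEsum : ∀ f : EE → ℝ,
      ∑ e : EE, f e =
        (∑ p ∈ fracSet y, if hm : p ∈ fracSet y then f (Sum.inl ⟨p, hm⟩) else 0) +
        ((∑ q ∈ intGrp χ x y, if hm : q ∈ intGrp χ x y then f (Sum.inr (Sum.inl ⟨q, hm⟩)) else 0) +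
        (∑ r ∈ intCl x y, if hm : r ∈ intCl x y then f (Sum.inr (Sum.inr ⟨r, hm⟩)) else 0)) := by
    intro f
    rw [Fintype.sum_sum_type, Fintype.sum_sum_type]
    congr 1
    · rw [Finset.univ_eq_attach, ← Finset.sum_attach (fracSet y)
        (fun p => if hm : p ∈ fracSet y then f (Sum.inl ⟨p, hm⟩) else 0)]
      apply Finset.sum_congr rfl
      intro p _
      rw [dif_pos p.2]
    congr 1
    · rw [Finset.univ_eq_attach, ← Finset.sum_attach (intGrp χ x y)
        (fun q => if hm : q ∈ intGrp χ x y then f (Sum.inr (Sum.inl ⟨q, hm⟩)) else 0)]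
      apply Finset.sum_congr rfl
      intro q _
      rw [dif_pos q.2]
    · rw [Finset.univ_eq_attach, ← Finset.sum_attach (intCl x y)
        (fun r => if hm : r ∈ intCl x y then f (Sum.inr (Sum.inr ⟨r, hm⟩)) else 0)]
      apply Finset.sum_congr rfl
      intro r _
      rw [dif_pos r.2]
  -- conservation consequences
  have hA : ∀ j₀ : P, ∑ i, D1 (i, j₀) = 0 := by
    intro j₀
    have hc := hcons (Sum.inl j₀)
    rw [hEsum] at hc
    have h2 : (∑ q ∈ intGrp χ x y, if hm : q ∈ intGrp χ x y then
        ((if hdE (Sum.inr (Sum.inl ⟨q, hm⟩)) = Sum.inl j₀ then (1:ℝ) else 0) -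
         (if tl (Sum.inr (Sum.inl ⟨q, hm⟩)) = Sum.inl j₀ then (1:ℝ) else 0)) *
          d (Sum.inr (Sum.inl ⟨q, hm⟩)) else 0) = 0 := by
      apply Finset.sum_eq_zero
      intro q hq
      rw [dif_pos hq]
      unfold tl hdE; delta Sum.elim; dsimp only
      rw [if_neg (by intro hcon; injections), if_neg (by intro hcon; injections)]
      ring
    have h3 : (∑ r ∈ intCl x y, if hm : r ∈ intCl x y then
        ((if hdE (Sum.inr (Sum.inr ⟨r, hm⟩)) = Sum.inl j₀ then (1:ℝ) else 0) -
         (if tl (Sum.inr (Sum.inr ⟨r, hm⟩)) = Sum.inl j₀ then (1:ℝ) else 0)) *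
          d (Sum.inr (Sum.inr ⟨r, hm⟩)) else 0) = 0 := by
      apply Finset.sum_eq_zero
      intro r hr
      rw [dif_pos hr]
      unfold tl hdE; delta Sum.elim; dsimp only
      rw [if_neg (by intro hcon; injections), if_neg (by intro hcon; injections)]
      ring
    have h1 : (∑ p ∈ fracSet y, if hm : p ∈ fracSet y then
        ((if hdE (Sum.inl ⟨p, hm⟩) = Sum.inl j₀ then (1:ℝ) else 0) -
         (if tl (Sum.inl ⟨p, hm⟩) = Sum.inl j₀ then (1:ℝ) else 0)) * d (Sum.inl ⟨p, hm⟩) else 0)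
        = ∑ p : S × P, -(if p.2 = j₀ then D1 p else 0) := by
      rw [Finset.sum_subset (Finset.subset_univ (fracSet y))]
      · apply Finset.sum_congr rfl
        intro p _
        by_cases hm : p ∈ fracSet y
        · rw [dif_pos hm]
          have hdD : d (Sum.inl ⟨p, hm⟩) = D1 p := (hD1val p hm).symm
          rw [hdD]
          unfold tl hdE; delta Sum.elim; dsimp only
          rw [if_neg (show ¬((Sum.inr (Sum.inl (p.1, χ p.2)) : VV) = Sum.inl j₀) from
            by intro hcon; injections)]
          by_cases hj : p.2 = j₀
          · rw [if_pos (show (Sum.inl p.2 : VV) = Sum.inl j₀ from by rw [hj]), if_pos hj]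
            ring
          · rw [if_neg (show ¬((Sum.inl p.2 : VV) = Sum.inl j₀) from by
              intro hcon; apply hj; injection hcon), if_neg hj]
            ring
        · rw [dif_neg hm, hD1z p hm]
          simp
      · intro p _ hm
        rw [dif_neg hm]
    rw [h1, h2, h3] at hc
    have h4 : ∑ p : S × P, -(if p.2 = j₀ then D1 p else 0) = -∑ i, D1 (i, j₀) := by
      rw [Finset.sum_neg_distrib]
      congr 1
      rw [Fintype.sum_prod_type]
      apply Finset.sum_congr rfl
      intro i _
      rw [show (∑ j : P, if (i, j).2 = j₀ then D1 (i, j) else 0)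
          = ∑ j : P, if j = j₀ then D1 (i, j) else 0 from rfl]
      rw [Finset.sum_ite_eq' Finset.univ j₀ (fun j => D1 (i, j)), if_pos (Finset.mem_univ _)]
    rw [h4] at hc
    linarith
  have hB : ∀ (i₀ : S) (h₀ : H),
      (∑ j ∈ Finset.univ.filter (fun j => χ j = h₀), D1 (i₀, j)) = D2 (i₀, h₀) := by
    intro i₀ h₀
    have hc := hcons (Sum.inr (Sum.inl (i₀, h₀)))
    rw [hEsum] at hc
    have h3 : (∑ r ∈ intCl x y, if hm : r ∈ intCl x y then
        ((if hdE (Sum.inr (Sum.inr ⟨r, hm⟩)) = Sum.inr (Sum.inl (i₀, h₀)) then (1:ℝ) else 0) -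
         (if tl (Sum.inr (Sum.inr ⟨r, hm⟩)) = Sum.inr (Sum.inl (i₀, h₀)) then (1:ℝ) else 0)) *
          d (Sum.inr (Sum.inr ⟨r, hm⟩)) else 0) = 0 := by
      apply Finset.sum_eq_zero
      intro r hr
      rw [dif_pos hr]
      unfold tl hdE; delta Sum.elim; dsimp only
      rw [if_neg (by intro hcon; injections), if_neg (by intro hcon; injections)]
      ring
    have h1 : (∑ p ∈ fracSet y, if hm : p ∈ fracSet y then
        ((if hdE (Sum.inl ⟨p, hm⟩) = Sum.inr (Sum.inl (i₀, h₀)) then (1:ℝ) else 0) -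
         (if tl (Sum.inl ⟨p, hm⟩) = Sum.inr (Sum.inl (i₀, h₀)) then (1:ℝ) else 0)) *
          d (Sum.inl ⟨p, hm⟩) else 0)
        = ∑ p : S × P, (if p.1 = i₀ ∧ χ p.2 = h₀ then D1 p else 0) := by
      rw [Finset.sum_subset (Finset.subset_univ (fracSet y))]
      · apply Finset.sum_congr rfl
        intro p _
        by_cases hm : p ∈ fracSet y
        · rw [dif_pos hm]
          have hdD : d (Sum.inl ⟨p, hm⟩) = D1 p := (hD1val p hm).symm
          rw [hdD]
          unfold tl hdE; delta Sum.elim; dsimp only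
          rw [if_neg (show ¬((Sum.inl p.2 : VV) = Sum.inr (Sum.inl (i₀, h₀))) from
            by intro hcon; injections)]
          by_cases hcnd : p.1 = i₀ ∧ χ p.2 = h₀
          · rw [if_pos (show (Sum.inr (Sum.inl (p.1, χ p.2)) : VV) = Sum.inr (Sum.inl (i₀, h₀))
              from by rw [hcnd.1, hcnd.2]), if_pos hcnd]
            ring
          · rw [if_neg (show ¬((Sum.inr (Sum.inl (p.1, χ p.2)) : VV) = Sum.inr (Sum.inl (i₀, h₀)))
              from by
                intro hcon
                apply hcnd
                injection hcon with h'
                injection h' with h''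
                exact ⟨congrArg Prod.fst h'', congrArg Prod.snd h''⟩), if_neg hcnd]
            ring
        · rw [dif_neg hm, hD1z p hm]
          simp
      · intro p _ hm
        rw [dif_neg hm]
    have h2 : (∑ q ∈ intGrp χ x y, if hm : q ∈ intGrp χ x y then
        ((if hdE (Sum.inr (Sum.inl ⟨q, hm⟩)) = Sum.inr (Sum.inl (i₀, h₀)) then (1:ℝ) else 0) -
         (if tl (Sum.inr (Sum.inl ⟨q, hm⟩)) = Sum.inr (Sum.inl (i₀, h₀)) then (1:ℝ) else 0)) *
          d (Sum.inr (Sum.inl ⟨q, hm⟩)) else 0)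
        = ∑ q : S × H, -(if q = (i₀, h₀) then D2 q else 0) := by
      rw [Finset.sum_subset (Finset.subset_univ (intGrp χ x y))]
      · apply Finset.sum_congr rfl
        intro q _
        by_cases hm : q ∈ intGrp χ x y
        · rw [dif_pos hm]
          have hdD : d (Sum.inr (Sum.inl ⟨q, hm⟩)) = D2 q := (hD2val q hm).symm
          rw [hdD]
          unfold tl hdE; delta Sum.elim; dsimp only
          rw [if_neg (show ¬((Sum.inr (Sum.inr (Sum.inl q.1)) : VV) = Sum.inr (Sum.inl (i₀, h₀)))
            from by intro hcon; injections)]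
          by_cases hcnd : q = (i₀, h₀)
          · rw [if_pos (show (Sum.inr (Sum.inl q) : VV) = Sum.inr (Sum.inl (i₀, h₀)) from
              by rw [hcnd]), if_pos hcnd]
            ring
          · rw [if_neg (show ¬((Sum.inr (Sum.inl q) : VV) = Sum.inr (Sum.inl (i₀, h₀))) from by
              intro hcon
              apply hcnd
              injection hcon with h'
              injection h' with h''), if_neg hcnd]
            ring
        · rw [dif_neg hm, hD2z q hm]
          simp
      · intro q _ hm
        rw [dif_neg hm]
    rw [h1, h2, h3] at hc
    have h4 : ∑ p : S × P, (if p.1 = i₀ ∧ χ p.2 = h₀ then D1 p else 0)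
        = ∑ j ∈ Finset.univ.filter (fun j => χ j = h₀), D1 (i₀, j) := by
      rw [Fintype.sum_prod_type]
      have hin : ∀ i : S, (∑ j : P, if i = i₀ ∧ χ j = h₀ then D1 (i, j) else 0)
          = (if i = i₀ then ∑ j : P, (if χ j = h₀ then D1 (i, j) else 0) else 0) := by
        intro i
        by_cases hi : i = i₀
        · simp [hi]
        · simp [hi]
      rw [Finset.sum_congr rfl (fun i _ => hin i)]
      rw [Finset.sum_ite_eq' Finset.univ i₀
        (fun i => ∑ j : P, (if χ j = h₀ then D1 (i, j) else 0))]
      rw [if_pos (Finset.mem_univ i₀), ← Finset.sum_filter]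
    have h5 : ∑ q : S × H, -(if q = (i₀, h₀) then D2 q else 0) = -D2 (i₀, h₀) := by
      rw [Finset.sum_neg_distrib]
      congr 1
      rw [Finset.sum_ite_eq' Finset.univ (i₀, h₀) D2]
      rw [if_pos (Finset.mem_univ _)]
    rw [h4, h5] at hc
    linarith
  have hC : ∀ i₀ : S, (∑ h, D2 (i₀, h)) = D3 i₀ := by
    intro i₀
    have hc := hcons (Sum.inr (Sum.inr (Sum.inl i₀)))
    rw [hEsum] at hc
    have h1 : (∑ p ∈ fracSet y, if hm : p ∈ fracSet y then
        ((if hdE (Sum.inl ⟨p, hm⟩) = Sum.inr (Sum.inr (Sum.inl i₀)) then (1:ℝ) else 0) -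
         (if tl (Sum.inl ⟨p, hm⟩) = Sum.inr (Sum.inr (Sum.inl i₀)) then (1:ℝ) else 0)) *
          d (Sum.inl ⟨p, hm⟩) else 0) = 0 := by
      apply Finset.sum_eq_zero
      intro p hp
      rw [dif_pos hp]
      unfold tl hdE; delta Sum.elim; dsimp only
      rw [if_neg (by intro hcon; injections), if_neg (by intro hcon; injections)]
      ring
    have h2 : (∑ q ∈ intGrp χ x y, if hm : q ∈ intGrp χ x y then
        ((if hdE (Sum.inr (Sum.inl ⟨q, hm⟩)) = Sum.inr (Sum.inr (Sum.inl i₀)) then (1:ℝ) else 0) -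
         (if tl (Sum.inr (Sum.inl ⟨q, hm⟩)) = Sum.inr (Sum.inr (Sum.inl i₀)) then (1:ℝ) else 0)) *
          d (Sum.inr (Sum.inl ⟨q, hm⟩)) else 0)
        = ∑ q : S × H, (if q.1 = i₀ then D2 q else 0) := by
      rw [Finset.sum_subset (Finset.subset_univ (intGrp χ x y))]
      · apply Finset.sum_congr rfl
        intro q _
        by_cases hm : q ∈ intGrp χ x y
        · rw [dif_pos hm]
          have hdD : d (Sum.inr (Sum.inl ⟨q, hm⟩)) = D2 q := (hD2val q hm).symm
          rw [hdD]
          unfold tl hdE; delta Sum.elim; dsimp only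
          rw [if_neg (show ¬((Sum.inr (Sum.inl q) : VV) = Sum.inr (Sum.inr (Sum.inl i₀))) from
            by intro hcon; injections)]
          by_cases hcnd : q.1 = i₀
          · rw [if_pos (show (Sum.inr (Sum.inr (Sum.inl q.1)) : VV) = Sum.inr (Sum.inr (Sum.inl i₀))
              from by rw [hcnd]), if_pos hcnd]
            ring
          · rw [if_neg (show ¬((Sum.inr (Sum.inr (Sum.inl q.1)) : VV)
                = Sum.inr (Sum.inr (Sum.inl i₀))) from by
              intro hcon
              apply hcnd
              injection hcon with h'
              injection h' with h''
              injection h'' with h'''), if_neg hcnd]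
            ring
        · rw [dif_neg hm, hD2z q hm]
          simp
      · intro q _ hm
        rw [dif_neg hm]
    have h3 : (∑ r ∈ intCl x y, if hm : r ∈ intCl x y then
        ((if hdE (Sum.inr (Sum.inr ⟨r, hm⟩)) = Sum.inr (Sum.inr (Sum.inl i₀)) then (1:ℝ) else 0) -
         (if tl (Sum.inr (Sum.inr ⟨r, hm⟩)) = Sum.inr (Sum.inr (Sum.inl i₀)) then (1:ℝ) else 0)) *
          d (Sum.inr (Sum.inr ⟨r, hm⟩)) else 0)
        = ∑ r : S, -(if r = i₀ then D3 r else 0) := by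
      rw [Finset.sum_subset (Finset.subset_univ (intCl x y))]
      · apply Finset.sum_congr rfl
        intro r _
        by_cases hm : r ∈ intCl x y
        · rw [dif_pos hm]
          have hdD : d (Sum.inr (Sum.inr ⟨r, hm⟩)) = D3 r := (hD3val r hm).symm
          rw [hdD]
          unfold tl hdE; delta Sum.elim; dsimp only
          rw [if_neg (show ¬((Sum.inr (Sum.inr (Sum.inr ())) : VV) = Sum.inr (Sum.inr (Sum.inl i₀)))
            from by intro hcon; injections)]
          by_cases hcnd : r = i₀
          · rw [if_pos (show (Sum.inr (Sum.inr (Sum.inl r)) : VV) = Sum.inr (Sum.inr (Sum.inl i₀))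
              from by rw [hcnd]), if_pos hcnd]
            ring
          · rw [if_neg (show ¬((Sum.inr (Sum.inr (Sum.inl r)) : VV)
                = Sum.inr (Sum.inr (Sum.inl i₀))) from by
              intro hcon
              apply hcnd
              injection hcon with h'
              injection h' with h''
              injection h'' with h'''), if_neg hcnd]
            ring
        · rw [dif_neg hm, hD3z r hm]
          simp
      · intro r _ hm
        rw [dif_neg hm]
    rw [h1, h2, h3] at hc
    have h4 : ∑ q : S × H, (if q.1 = i₀ then D2 q else 0) = ∑ h, D2 (i₀, h) := by
      rw [Fintype.sum_prod_type]
      have hin : ∀ i : S, (∑ h : H, if i = i₀ then D2 (i, h) else 0)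
          = (if i = i₀ then ∑ h : H, D2 (i, h) else 0) := by
        intro i
        by_cases hi : i = i₀
        · simp [hi]
        · simp [hi]
      rw [Finset.sum_congr rfl (fun i _ => hin i)]
      rw [Finset.sum_ite_eq' Finset.univ i₀ (fun i => ∑ h : H, D2 (i, h))]
      rw [if_pos (Finset.mem_univ i₀)]
    have h5 : ∑ r : S, -(if r = i₀ then D3 r else 0) = -D3 i₀ := by
      rw [Finset.sum_neg_distrib]
      congr 1
      rw [Finset.sum_ite_eq' Finset.univ i₀ D3]
      rw [if_pos (Finset.mem_univ _)]
    rw [h4, h5] at hc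
    linarith
  have hD : ∀ i₀ : S, (∑ j, D1 (i₀, j)) = D3 i₀ := by
    intro i₀
    rw [← Finset.sum_fiberwise Finset.univ χ (fun j => D1 (i₀, j))]
    rw [Finset.sum_congr rfl (fun h _ => hB i₀ h)]
    exact hC i₀
  -- some fractional entry moves
  have hexD1 : ∃ p : S × P, D1 p ≠ 0 := by
    by_contra hall
    push_neg at hall
    have hD2all : ∀ q : S × H, D2 q = 0 := by
      intro q
      have := hB q.1 q.2
      rw [Finset.sum_congr rfl (fun j _ => hall (q.1, j))] at this
      rw [Finset.sum_const_zero] at this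
      rw [← this]
    have hD3all : ∀ r : S, D3 r = 0 := by
      intro r
      rw [← hC r, Finset.sum_congr rfl (fun h _ => hD2all (r, h)), Finset.sum_const_zero]
    apply hdne
    funext e
    rcases e with p | q | r
    · have := hall p.1
      rw [hD1val p.1 p.2] at this
      simpa using this
    · have := hD2all q.1
      rw [hD2val q.1 q.2] at this
      simpa using this
    · have := hD3all r.1
      rw [hD3val r.1 r.2] at this
      simpa using this
  -- sign choice
  set A := ∑ i, ∑ j, c i j * D1 (i, j) with hAdef
  set s : ℝ := if A ≤ 0 then 1 else -1 with hsdef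
  have hs01 : s = 1 ∨ s = -1 := by
    rw [hsdef]; by_cases hA0 : A ≤ 0 <;> simp [hA0]
  have hsA : s * A ≤ 0 := by
    rw [hsdef]
    by_cases hA0 : A ≤ 0
    · rw [if_pos hA0]; linarith
    · rw [if_neg hA0]; push_neg at hA0; linarith
  have hcases1 : ∀ p : S × P, D1 p ≠ 0 → s * D1 p = 1 ∨ s * D1 p = -1 := by
    intro p hne
    rcases hD101 p with h0 | h1 | h1
    · exact absurd h0 hne
    · rcases hs01 with hs | hs <;> rw [hs, h1] <;> norm_num
    · rcases hs01 with hs | hs <;> rw [hs, h1] <;> norm_num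
  have hcases2 : ∀ q : S × H, D2 q ≠ 0 → s * D2 q = 1 ∨ s * D2 q = -1 := by
    intro q hne
    rcases hD201 q with h0 | h1 | h1
    · exact absurd h0 hne
    · rcases hs01 with hs | hs <;> rw [hs, h1] <;> norm_num
    · rcases hs01 with hs | hs <;> rw [hs, h1] <;> norm_num
  have hcases3 : ∀ r : S, D3 r ≠ 0 → s * D3 r = 1 ∨ s * D3 r = -1 := by
    intro r hne
    rcases hD301 r with h0 | h1 | h1
    · exact absurd h0 hne
    · rcases hs01 with hs | hs <;> rw [hs, h1] <;> norm_num
    · rcases hs01 with hs | hs <;> rw [hs, h1] <;> norm_num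
  -- step size
  let T := (S × P) ⊕ (S × H) ⊕ S
  let val : T → ℝ := Sum.elim
    (fun p => if s * D1 p = 1 then 1 - y p.1 p.2 else y p.1 p.2)
    (Sum.elim
      (fun q => if s * D2 q = 1 then (⌈gS χ x q.1 q.2⌉ : ℝ) - gS χ y q.1 q.2
                else gS χ y q.1 q.2 - (⌊gS χ x q.1 q.2⌋ : ℝ))
      (fun r => if s * D3 r = 1 then (⌈tS x r⌉ : ℝ) - tS y r
                else tS y r - (⌊tS x r⌋ : ℝ)))
  let act : Finset T := Finset.univ.filter (Sum.elim (fun p => D1 p ≠ 0)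
    (Sum.elim (fun q => D2 q ≠ 0) (fun r => D3 r ≠ 0)))
  have hactne : act.Nonempty := by
    obtain ⟨p, hp⟩ := hexD1
    exact ⟨Sum.inl p, Finset.mem_filter.2 ⟨Finset.mem_univ _, hp⟩⟩
  set ε := act.inf' hactne val with hεdef
  have hεpos : 0 < ε := by
    rw [hεdef, Finset.lt_inf'_iff]
    rintro (p | q | r) hmem
    · have hne : D1 p ≠ 0 := (Finset.mem_filter.1 hmem).2
      have hpF : p ∈ fracSet y := by
        by_contra hnF
        exact hne (hD1z p hnF)
      rw [hFmem] at hpF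
      show (0 : ℝ) < if s * D1 p = 1 then 1 - y p.1 p.2 else y p.1 p.2
      by_cases hc1 : s * D1 p = 1
      · rw [if_pos hc1]; linarith [hpF.2]
      · rw [if_neg hc1]; exact hpF.1
    · have hne : D2 q ≠ 0 := (Finset.mem_filter.1 hmem).2
      have hqG : q ∈ intGrp χ x y := by
        by_contra hnG
        exact hne (hD2z q hnG)
      rw [hGmem] at hqG
      show (0 : ℝ) < if s * D2 q = 1 then (⌈gS χ x q.1 q.2⌉ : ℝ) - gS χ y q.1 q.2
          else gS χ y q.1 q.2 - (⌊gS χ x q.1 q.2⌋ : ℝ)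
      by_cases hc1 : s * D2 q = 1
      · rw [if_pos hc1]; linarith [hqG.2]
      · rw [if_neg hc1]; linarith [hqG.1]
    · have hne : D3 r ≠ 0 := (Finset.mem_filter.1 hmem).2
      have hrC : r ∈ intCl x y := by
        by_contra hnC
        exact hne (hD3z r hnC)
      rw [hCmem] at hrC
      show (0 : ℝ) < if s * D3 r = 1 then (⌈tS x r⌉ : ℝ) - tS y r
          else tS y r - (⌊tS x r⌋ : ℝ)
      by_cases hc1 : s * D3 r = 1
      · rw [if_pos hc1]; linarith [hrC.2]
      · rw [if_neg hc1]; linarith [hrC.1]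
  have hεle : ∀ t ∈ act, ε ≤ val t := fun t ht => Finset.inf'_le val ht
  -- the new point
  set y' : S → P → ℝ := fun i j => y i j + ε * (s * D1 (i, j)) with hy'def
  have hy'gS : ∀ i h, gS χ y' i h = gS χ y i h + ε * (s * D2 (i, h)) := by
    intro i h
    unfold gS
    rw [← hB i h]
    rw [Finset.mul_sum, Finset.mul_sum, ← Finset.sum_add_distrib]
  have hy'tS : ∀ i, tS y' i = tS y i + ε * (s * D3 i) := by
    intro i
    unfold tS
    rw [← hD i]
    rw [Finset.mul_sum, Finset.mul_sum, ← Finset.sum_add_distrib]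
  have hy'col : ∀ j, ∑ i, y' i j = 1 := by
    intro j
    have : ∑ i, y' i j = ∑ i, y i j + ε * (s * ∑ i, D1 (i, j)) := by
      rw [Finset.mul_sum, Finset.mul_sum, ← Finset.sum_add_distrib]
    rw [this, hA j, hcol j]
    ring
  have hy'box : ∀ i j, 0 ≤ y' i j ∧ y' i j ≤ 1 := by
    intro i j
    by_cases hne : D1 (i, j) = 0
    · have : y' i j = y i j := by rw [hy'def]; simp [hne]
      rw [this]; exact hbox i j
    · have hpF : (i, j) ∈ fracSet y := by
        by_contra hnF
        exact hne (hD1z (i, j) hnF)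
      rw [hFmem] at hpF
      have hle : ε ≤ if s * D1 (i, j) = 1 then 1 - y i j else y i j := by
        exact hεle (Sum.inl (i, j)) (Finset.mem_filter.2 ⟨Finset.mem_univ _, hne⟩)
      rcases hcases1 (i, j) hne with hc1 | hc1
      · rw [if_pos hc1] at hle
        constructor
        · rw [hy'def]; simp only; rw [hc1]; nlinarith [hpF.1, hεpos]
        · rw [hy'def]; simp only; rw [hc1]; nlinarith
      · rw [if_neg (by rw [hc1]; norm_num)] at hle
        constructor
        · rw [hy'def]; simp only; rw [hc1]; nlinarith
        · rw [hy'def]; simp only; rw [hc1]; nlinarith [hpF.2, hεpos]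
  have hy'grp : ∀ i h, (⌊gS χ x i h⌋ : ℝ) ≤ gS χ y' i h ∧ gS χ y' i h ≤ (⌈gS χ x i h⌉ : ℝ) := by
    intro i h
    rw [hy'gS i h]
    by_cases hne : D2 (i, h) = 0
    · rw [hne]; simpa using hgrp i h
    · have hqG : (i, h) ∈ intGrp χ x y := by
        by_contra hnG
        exact hne (hD2z (i, h) hnG)
      rw [hGmem] at hqG
      have hle : ε ≤ if s * D2 (i, h) = 1 then (⌈gS χ x i h⌉ : ℝ) - gS χ y i h
          else gS χ y i h - (⌊gS χ x i h⌋ : ℝ) := by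
        exact hεle (Sum.inr (Sum.inl (i, h))) (Finset.mem_filter.2 ⟨Finset.mem_univ _, hne⟩)
      rcases hcases2 (i, h) hne with hc1 | hc1
      · rw [if_pos hc1] at hle
        rw [hc1]
        constructor
        · nlinarith [hqG.1, hεpos]
        · nlinarith
      · rw [if_neg (by rw [hc1]; norm_num)] at hle
        rw [hc1]
        constructor
        · nlinarith
        · nlinarith [hqG.2, hεpos]
  have hy'cl : ∀ i, (⌊tS x i⌋ : ℝ) ≤ tS y' i ∧ tS y' i ≤ (⌈tS x i⌉ : ℝ) := by
    intro i
    rw [hy'tS i]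
    by_cases hne : D3 i = 0
    · rw [hne]; simpa using hcl i
    · have hrC : i ∈ intCl x y := by
        by_contra hnC
        exact hne (hD3z i hnC)
      rw [hCmem] at hrC
      have hle : ε ≤ if s * D3 i = 1 then (⌈tS x i⌉ : ℝ) - tS y i
          else tS y i - (⌊tS x i⌋ : ℝ) := by
        exact hεle (Sum.inr (Sum.inr i)) (Finset.mem_filter.2 ⟨Finset.mem_univ _, hne⟩)
      rcases hcases3 i hne with hc1 | hc1
      · rw [if_pos hc1] at hle
        rw [hc1]
        constructor
        · nlinarith [hrC.1, hεpos]
        · nlinarith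
      · rw [if_neg (by rw [hc1]; norm_num)] at hle
        rw [hc1]
        constructor
        · nlinarith
        · nlinarith [hrC.2, hεpos]
  have hy'cost : (∑ i, ∑ j, c i j * y' i j) ≤ (∑ i, ∑ j, c i j * x i j) := by
    have hexp : ∑ i, ∑ j, c i j * y' i j
        = (∑ i, ∑ j, c i j * y i j) + ε * (s * A) := by
      rw [hAdef, Finset.mul_sum, Finset.mul_sum, ← Finset.sum_add_distrib]
      apply Finset.sum_congr rfl
      intro i _
      rw [Finset.mul_sum, Finset.mul_sum, ← Finset.sum_add_distrib]
      apply Finset.sum_congr rfl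
      intro j _
      show c i j * (y i j + ε * (s * D1 (i, j))) = _
      ring
    rw [hexp]
    have : ε * (s * A) ≤ 0 := by
      rcases hs01 with hs | hs <;> nlinarith [hεpos]
    linarith
  -- subsets
  have hFsub : fracSet y' ⊆ fracSet y := by
    intro p hp
    by_contra hnp
    have hz : D1 p = 0 := hD1z p hnp
    have heq : y' p.1 p.2 = y p.1 p.2 := by
      rw [hy'def]
      simp only
      rw [show D1 (p.1, p.2) = D1 p from congrArg D1 (Prod.mk.eta), hz]
      ring
    rw [hFmem, heq, ← hFmem] at hp
    exact hnp hp
  have hGsub : intGrp χ x y' ⊆ intGrp χ x y := by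
    intro q hq
    by_contra hnq
    have hz : D2 q = 0 := hD2z q hnq
    have heq : gS χ y' q.1 q.2 = gS χ y q.1 q.2 := by
      rw [hy'gS q.1 q.2]
      rw [show D2 (q.1, q.2) = D2 q from congrArg D2 (Prod.mk.eta), hz]
      ring
    rw [hGmem, heq, ← hGmem] at hq
    exact hnq hq
  have hCsub : intCl x y' ⊆ intCl x y := by
    intro r hr
    by_contra hnr
    have hz : D3 r = 0 := hD3z r hnr
    have heq : tS y' r = tS y r := by
      rw [hy'tS r, hz]
      ring
    rw [hCmem, heq, ← hCmem] at hr
    exact hnr hr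
  -- strict decrease at the minimizer
  obtain ⟨t₀, ht₀mem, ht₀val⟩ := Finset.exists_mem_eq_inf' hactne val
  have hstrict : Msr χ x y' < Msr χ x y := by
    unfold Msr
    have hcF := Finset.card_le_card hFsub
    have hcG := Finset.card_le_card hGsub
    have hcC := Finset.card_le_card hCsub
    rcases t₀ with p | q | r
    · -- an entry becomes integral
      have hne : D1 p ≠ 0 := (Finset.mem_filter.1 ht₀mem).2
      have hpF : p ∈ fracSet y := by
        by_contra hnF; exact hne (hD1z p hnF)
      have hval : ε = if s * D1 p = 1 then 1 - y p.1 p.2 else y p.1 p.2 := ht₀val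
      have hnotin : p ∉ fracSet y' := by
        rw [hFmem]
        have hyp : y' p.1 p.2 = y p.1 p.2 + ε * (s * D1 p) := by
          rw [hy'def]
        rcases hcases1 p hne with hc1 | hc1
        · rw [if_pos hc1] at hval
          rw [hyp, hc1, hval]
          intro hcon
          have := hcon.2
          linarith
        · rw [if_neg (by rw [hc1]; norm_num)] at hval
          rw [hyp, hc1, hval]
          intro hcon
          have := hcon.1
          linarith
      have hlt : (fracSet y').card < (fracSet y).card :=
        Finset.card_lt_card ((Finset.ssubset_iff_of_subset hFsub).2 ⟨p, hpF, hnotin⟩)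
      omega
    · -- a group sum becomes tight
      have hne : D2 q ≠ 0 := (Finset.mem_filter.1 ht₀mem).2
      have hqG : q ∈ intGrp χ x y := by
        by_contra hnG; exact hne (hD2z q hnG)
      have hval : ε = if s * D2 q = 1 then (⌈gS χ x q.1 q.2⌉ : ℝ) - gS χ y q.1 q.2
          else gS χ y q.1 q.2 - (⌊gS χ x q.1 q.2⌋ : ℝ) := ht₀val
      have hnotin : q ∉ intGrp χ x y' := by
        rw [hGmem]
        have hyq : gS χ y' q.1 q.2 = gS χ y q.1 q.2 + ε * (s * D2 q) := by
          rw [hy'gS q.1 q.2]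
        rcases hcases2 q hne with hc1 | hc1
        · rw [if_pos hc1] at hval
          rw [hyq, hc1, hval]
          intro hcon
          have := hcon.2
          linarith
        · rw [if_neg (by rw [hc1]; norm_num)] at hval
          rw [hyq, hc1, hval]
          intro hcon
          have := hcon.1
          linarith
      have hlt : (intGrp χ x y').card < (intGrp χ x y).card :=
        Finset.card_lt_card ((Finset.ssubset_iff_of_subset hGsub).2 ⟨q, hqG, hnotin⟩)
      omega
    · -- a cluster sum becomes tight
      have hne : D3 r ≠ 0 := (Finset.mem_filter.1 ht₀mem).2
      have hrC : r ∈ intCl x y := by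
        by_contra hnC; exact hne (hD3z r hnC)
      have hval : ε = if s * D3 r = 1 then (⌈tS x r⌉ : ℝ) - tS y r
          else tS y r - (⌊tS x r⌋ : ℝ) := ht₀val
      have hnotin : r ∉ intCl x y' := by
        rw [hCmem]
        have hyr : tS y' r = tS y r + ε * (s * D3 r) := hy'tS r
        rcases hcases3 r hne with hc1 | hc1
        · rw [if_pos hc1] at hval
          rw [hyr, hc1, hval]
          intro hcon
          have := hcon.2
          linarith
        · rw [if_neg (by rw [hc1]; norm_num)] at hval
          rw [hyr, hc1, hval]
          intro hcon
          have := hcon.1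
          linarith
      have hlt : (intCl x y').card < (intCl x y).card :=
        Finset.card_lt_card ((Finset.ssubset_iff_of_subset hCsub).2 ⟨r, hrC, hnotin⟩)
      omega
  exact ⟨y', ⟨hy'box, hy'col, hy'grp, hy'cl, hy'cost⟩, hstrict⟩

theorem round_down (χ : P → H) (c : S → P → ℝ) (x : S → P → ℝ) :
    ∀ n : ℕ, ∀ y : S → P → ℝ, Msr χ x y ≤ n → Feas χ c x y →
    ∃ xb : S → P → ℝ, (∀ i j, xb i j = 0 ∨ xb i j = 1) ∧ Feas χ c x xb := by
  intro n
  induction n with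
  | zero =>
    intro y hm hy
    by_cases hfr : (fracSet y).Nonempty
    · obtain ⟨y', hy', hlt⟩ := step_lemma χ c x y hy hfr
      omega
    · refine ⟨y, ?_, hy⟩
      intro i j
      rw [Finset.not_nonempty_iff_eq_empty] at hfr
      have : (i, j) ∉ fracSet y := by rw [hfr]; exact Finset.notMem_empty _
      unfold fracSet at this
      simp only [Finset.mem_filter, Finset.mem_univ, true_and] at this
      push_neg at this
      rcases lt_or_eq_of_le (hy.1 i j).1 with h' | h'
      · exact Or.inr (le_antisymm (hy.1 i j).2 (this h'))
      · exact Or.inl h'.symm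
  | succ n ih =>
    intro y hm hy
    by_cases hfr : (fracSet y).Nonempty
    · obtain ⟨y', hy', hlt⟩ := step_lemma χ c x y hy hfr
      exact ih y' (by omega) hy'
    · refine ⟨y, ?_, hy⟩
      intro i j
      rw [Finset.not_nonempty_iff_eq_empty] at hfr
      have : (i, j) ∉ fracSet y := by rw [hfr]; exact Finset.notMem_empty _
      unfold fracSet at this
      simp only [Finset.mem_filter, Finset.mem_univ, true_and] at this
      push_neg at this
      rcases lt_or_eq_of_le (hy.1 i j).1 with h' | h'
      · exact Or.inr (le_antisymm (hy.1 i j).2 (this h'))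
      · exact Or.inl h'.symm

end Main

/-- Deterministic network-flow rounding guarantee: a fractional assignment `x` can be
rounded to an integral assignment `x̄` that assigns each point once, does not increase
the linear cost, and keeps every cluster size and every per-cluster per-color count
between the floor and the ceiling of its fractional value. -/
theorem stmt_14 {S P H : Type*} [Fintype S] [Fintype P] [Fintype H] [DecidableEq H]
    (χ : P → H) (c : S → P → ℝ) (hc : ∀ i j, 0 ≤ c i j)
    (x : S → P → ℝ) (hx : ∀ i j, x i j ∈ Set.Icc (0 : ℝ) 1)
    (hx1 : ∀ j, ∑ i, x i j = 1) :
    ∃ xb : S → P → ℝ,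
      (∀ i j, xb i j = 0 ∨ xb i j = 1) ∧
      (∀ j, ∑ i, xb i j = 1) ∧
      (∑ i, ∑ j, c i j * xb i j) ≤ (∑ i, ∑ j, c i j * x i j) ∧
      (∀ i, (⌊∑ j, x i j⌋ : ℝ) ≤ ∑ j, xb i j ∧ (∑ j, xb i j) ≤ (⌈∑ j, x i j⌉ : ℝ)) ∧
      (∀ i h, (⌊∑ j ∈ Finset.univ.filter (fun j => χ j = h), x i j⌋ : ℝ) ≤
          (∑ j ∈ Finset.univ.filter (fun j => χ j = h), xb i j) ∧
        (∑ j ∈ Finset.univ.filter (fun j => χ j = h), xb i j) ≤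
          (⌈∑ j ∈ Finset.univ.filter (fun j => χ j = h), x i j⌉ : ℝ)) := by
  have hfeas : Feas χ c x x := by
    refine ⟨fun i j => ⟨(hx i j).1, (hx i j).2⟩, hx1, ?_, ?_, le_refl _⟩
    · exact fun i h => ⟨Int.floor_le _, Int.le_ceil _⟩
    · exact fun i => ⟨Int.floor_le _, Int.le_ceil _⟩
  obtain ⟨xb, h01, hfeas'⟩ := round_down χ c x (Msr χ x x) x le_rfl hfeas
  exact ⟨xb, h01, hfeas'.2.1, hfeas'.2.2.2.2,
    fun i => hfeas'.2.2.2.1 i, fun i h => hfeas'.2.2.1 i h⟩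
end

section
/- Let S and P be finite sets, H a finite set of colors, and χ : P → H. Let x = (x_{ij}) ∈ [0,1]^{S×P} satisfy ∑_{i∈S} x_{ij} = 1 for every j ∈ P. Then there exists a finitely supported probability distribution over matrices x̄ = (x̄_{ij}) ∈ {0,1}^{S×P} such that, with probability 1: (i) ∑_{i∈S} x̄_{ij} = 1 for every j ∈ P; (ii) for every i ∈ S, ⌊∑_{j∈P} x_{ij}⌋ ≤ ∑_{j∈P} x̄_{ij} ≤ ⌈∑_{j∈P} x_{ij}⌉; (iii) for every i ∈ S and h ∈ H, ⌊∑_{j∈P, χ(j)=h} x_{ij}⌋ ≤ ∑_{j∈P, χ(j)=h} x̄_{ij} ≤ ⌈∑_{j∈P, χ(j)=h} x_{ij}⌉; and moreover the expectation E[x̄_{ij}] equals x_{ij} for every i ∈ S and j ∈ P. -/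
noncomputable section
namespace DepRound
open Finset

set_option linter.unusedSectionVars false

def IsInt (r : ℝ) : Prop := ∃ z : ℤ, r = z

lemma IsInt.add {a b : ℝ} (ha : IsInt a) (hb : IsInt b) : IsInt (a + b) := by
  obtain ⟨z, rfl⟩ := ha; obtain ⟨w, rfl⟩ := hb; exact ⟨z + w, by push_cast; ring⟩
lemma IsInt.neg {a : ℝ} (ha : IsInt a) : IsInt (-a) := by
  obtain ⟨z, rfl⟩ := ha; exact ⟨-z, by push_cast; ring⟩
lemma IsInt.sub {a b : ℝ} (ha : IsInt a) (hb : IsInt b) : IsInt (a - b) :=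
  (sub_eq_add_neg a b ▸ ha.add hb.neg)

lemma isInt_sum {α : Type*} {s : Finset α} {f : α → ℝ} (h : ∀ a ∈ s, IsInt (f a)) :
    IsInt (∑ a ∈ s, f a) := by
  classical
  induction s using Finset.induction_on with
  | empty => exact ⟨0, by simp⟩
  | insert a s hnot ih =>
    rw [Finset.sum_insert hnot]
    exact (h a (mem_insert_self a s)).add (ih fun b hb => h b (mem_insert_of_mem hb))

lemma frac_of_sum {α : Type*} {s : Finset α} {f : α → ℝ} (h : ¬ IsInt (∑ a ∈ s, f a)) :
    ∃ a ∈ s, ¬ IsInt (f a) := by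
  by_contra hc
  push_neg at hc
  exact h (isInt_sum fun a ha => hc a ha)

lemma exists_other_frac {α : Type*} {s : Finset α} {f : α → ℝ} {a : α} (ha : a ∈ s)
    (hs : IsInt (∑ b ∈ s, f b)) (hfa : ¬ IsInt (f a)) :
    ∃ b ∈ s, b ≠ a ∧ ¬ IsInt (f b) := by
  classical
  have hsum : ∑ b ∈ s.erase a, f b = (∑ b ∈ s, f b) - f a := by
    rw [Finset.sum_erase_eq_sub ha]
  have hfr : ¬ IsInt (∑ b ∈ s.erase a, f b) := by
    rw [hsum]
    intro hI
    exact hfa (by simpa using hs.sub hI)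
  obtain ⟨b, hb, hbf⟩ := frac_of_sum hfr
  exact ⟨b, Finset.mem_of_mem_erase hb, Finset.ne_of_mem_erase hb, hbf⟩

lemma floor_lt_of_frac {r : ℝ} (h : ¬ IsInt r) : (⌊r⌋ : ℝ) < r := by
  rcases lt_or_eq_of_le (Int.floor_le r) with h' | h'
  · exact h'
  · exact absurd ⟨⌊r⌋, h'.symm⟩ h

lemma lt_ceil_of_frac {r : ℝ} (h : ¬ IsInt r) : r < (⌈r⌉ : ℝ) := by
  rcases lt_or_eq_of_le (Int.le_ceil r) with h' | h'
  · exact h'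
  · exact absurd ⟨⌈r⌉, h'⟩ h

section Base
variable {V κ : Type*} [Fintype V] [Fintype κ]

lemma row_step (M : V → κ → ℝ) (hrow : ∀ a, IsInt (∑ b, M a b)) {a : V} {b : κ}
    (h : ¬ IsInt (M a b)) : ∃ b', b' ≠ b ∧ ¬ IsInt (M a b') := by
  obtain ⟨b', _, hne, hf⟩ := exists_other_frac (Finset.mem_univ b) (hrow a) h
  exact ⟨b', hne, hf⟩

lemma col_step (M : V → κ → ℝ) (hcol : ∀ b, IsInt (∑ a, M a b)) {a : V} {b : κ}
    (h : ¬ IsInt (M a b)) : ∃ a', a' ≠ a ∧ ¬ IsInt (M a' b) := by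
  obtain ⟨a', _, hne, hf⟩ := exists_other_frac (Finset.mem_univ a) (hcol b) h
  exact ⟨a', hne, hf⟩

variable (M : V → κ → ℝ) (hrow : ∀ a, IsInt (∑ b, M a b)) (hcol : ∀ b, IsInt (∑ a, M a b))

def stepFn (n : ℕ) (p : {e : V × κ // ¬ IsInt (M e.1 e.2)}) : {e : V × κ // ¬ IsInt (M e.1 e.2)} :=
  if Even n then
    ⟨(p.1.1, (row_step M hrow p.2).choose), (row_step M hrow p.2).choose_spec.2⟩
  else
    ⟨((col_step M hcol p.2).choose, p.1.2), (col_step M hcol p.2).choose_spec.2⟩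

def walk (e0 : {e : V × κ // ¬ IsInt (M e.1 e.2)}) : ℕ → {e : V × κ // ¬ IsInt (M e.1 e.2)} :=
  fun n => Nat.rec e0 (fun n p => stepFn M hrow hcol n p) n

lemma walk_succ (e0) (n : ℕ) :
    walk M hrow hcol e0 (n + 1) = stepFn M hrow hcol n (walk M hrow hcol e0 n) := rfl

lemma stepFn_even {n : ℕ} (hn : Even n) (p) :
    (stepFn M hrow hcol n p).1.1 = p.1.1 ∧ (stepFn M hrow hcol n p).1.2 ≠ p.1.2 := by
  unfold stepFn
  rw [if_pos hn]
  exact ⟨rfl, (row_step M hrow p.2).choose_spec.1⟩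

lemma stepFn_odd {n : ℕ} (hn : ¬ Even n) (p) :
    (stepFn M hrow hcol n p).1.2 = p.1.2 ∧ (stepFn M hrow hcol n p).1.1 ≠ p.1.1 := by
  unfold stepFn
  rw [if_neg hn]
  exact ⟨rfl, (col_step M hcol p.2).choose_spec.1⟩

include hrow hcol in
lemma base_lemma (e0 : V × κ) (he0 : ¬ IsInt (M e0.1 e0.2)) :
    ∃ d : V → κ → ℝ, d ≠ 0 ∧ (∀ a b, IsInt (M a b) → d a b = 0) ∧
      (∀ b, ∑ a, d a b = 0) ∧ (∀ a, ∑ b, d a b = 0) := by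
  classical
  set W : ℕ → V × κ := fun n => (walk M hrow hcol ⟨e0, he0⟩ n).1 with hWdef
  have hWf : ∀ n, ¬ IsInt (M (W n).1 (W n).2) := fun n => (walk M hrow hcol ⟨e0, he0⟩ n).2
  have hstepE : ∀ n, Even n → (W (n+1)).1 = (W n).1 ∧ (W (n+1)).2 ≠ (W n).2 := by
    intro n hn
    have := stepFn_even M hrow hcol hn (walk M hrow hcol ⟨e0, he0⟩ n)
    simpa [hWdef, walk_succ] using this
  have hstepO : ∀ n, ¬ Even n → (W (n+1)).2 = (W n).2 ∧ (W (n+1)).1 ≠ (W n).1 := by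
    intro n hn
    have := stepFn_odd M hrow hcol hn (walk M hrow hcol ⟨e0, he0⟩ n)
    simpa [hWdef, walk_succ] using this
  clear_value W
  set v : ℕ → V ⊕ κ := fun n => if Even n then Sum.inl (W n).1 else Sum.inr (W n).2 with hvdef
  have hvE : ∀ {n}, Even n → v n = Sum.inl (W n).1 := fun {n} hn => by simp [hvdef, hn]
  have hvO : ∀ {n}, ¬ Even n → v n = Sum.inr (W n).2 := fun {n} hn => by simp [hvdef, hn]
  have hparity : ∀ {a b : ℕ}, v a = v b → (Even a ↔ Even b) := by
    intro a b hab
    by_cases ha : Even a <;> by_cases hb : Even b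
    · simp [ha, hb]
    · rw [hvE ha, hvO hb] at hab; exact absurd hab (by simp)
    · rw [hvO ha, hvE hb] at hab; exact absurd hab (by simp)
    · simp [ha, hb]
  have hex : ∃ l, ∃ k, k < l ∧ v k = v l := by
    obtain ⟨a, b, hab, hveq⟩ := Finite.exists_ne_map_eq_of_infinite v
    rcases hab.lt_or_gt with h | h
    · exact ⟨b, a, h, hveq⟩
    · exact ⟨a, b, h, hveq.symm⟩
  obtain ⟨l, k, hkl, hvkl, hinj⟩ :
      ∃ l k, k < l ∧ v k = v l ∧ ∀ {a b : ℕ}, a < b → b < l → v a ≠ v b := by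
    refine ⟨Nat.find hex, ?_⟩
    obtain ⟨k, hkl, hvkl⟩ := Nat.find_spec hex
    exact ⟨k, hkl, hvkl, fun {a b} hab hbl h => Nat.find_min hex hbl ⟨a, hab, h⟩⟩
  have hk1l : k + 1 ≤ l := hkl
  have hEkl : Even k ↔ Even l := hparity hvkl
  set d : V → κ → ℝ := fun a b =>
    ∑ m ∈ Finset.Ico (k+1) (l+1), ((-1:ℝ)^m) * (if W m = (a, b) then 1 else 0) with hddef
  have hedge : ∀ m, k + 1 ≤ m → m ≤ l → m ≠ k + 1 → W m ≠ W (k+1) := by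
    intro m hm1 hm2 hm3 heq
    obtain ⟨n, rfl⟩ : ∃ n, m = n + 1 := ⟨m - 1, by omega⟩
    have h1 : (W (n+1)).1 = (W (k+1)).1 := by rw [heq]
    have h2 : (W (n+1)).2 = (W (k+1)).2 := by rw [heq]
    by_cases hk : Even k
    · have hl : Even l := hEkl.mp hk
      have hk1 : ¬ Even (k+1) := by simp [Nat.even_add_one, hk]
      have hvk : v k = Sum.inl (W (k+1)).1 := by rw [hvE hk, (hstepE k hk).1]
      have hvk1 : v (k+1) = Sum.inr (W (k+1)).2 := hvO hk1
      by_cases hm : Even (n+1)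
      · have hvm : v (n+1) = Sum.inl (W (k+1)).1 := by rw [hvE hm, h1]
        rcases eq_or_lt_of_le hm2 with hml | hml
        · have hn : ¬ Even n := by simpa [Nat.even_add_one] using hm
          have hvn : v n = Sum.inr (W (k+1)).2 := by
            rw [hvO hn, ← (hstepO n hn).1, h2]
          rcases eq_or_lt_of_le (show k+1 ≤ n by omega) with h' | h'
          · subst h'
            exact (hstepO (k+1) hk1).2 h1
          · exact hinj h' (by omega) (hvk1.trans hvn.symm)
        · exact hinj (show k < n+1 by omega) hml (hvk.trans hvm.symm)
      · have hn : Even n := by simpa [Nat.even_add_one] using hm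
        have hvn : v n = Sum.inl (W (k+1)).1 := by
          rw [hvE hn, ← (hstepE n hn).1, h1]
        exact hinj (show k < n by omega) (show n < l by omega) (hvk.trans hvn.symm)
    · have hl : ¬ Even l := fun h => hk (hEkl.mpr h)
      have hk1 : Even (k+1) := by simpa [Nat.even_add_one] using hk
      have hvk : v k = Sum.inr (W (k+1)).2 := by rw [hvO hk, (hstepO k hk).1]
      have hvk1 : v (k+1) = Sum.inl (W (k+1)).1 := hvE hk1
      by_cases hm : Even (n+1)
      · have hn : ¬ Even n := by
          intro hh; exact (by simpa [Nat.even_add_one] using hm : ¬ Even n) hh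
        have hvn : v n = Sum.inr (W (k+1)).2 := by
          rw [hvO hn, ← (hstepO n hn).1, h2]
        exact hinj (show k < n by omega) (show n < l by omega) (hvk.trans hvn.symm)
      · have hvm : v (n+1) = Sum.inr (W (k+1)).2 := by rw [hvO hm, h2]
        rcases eq_or_lt_of_le hm2 with hml | hml
        · have hn : Even n := by simpa [Nat.even_add_one] using hm
          have hvn : v n = Sum.inl (W (k+1)).1 := by
            rw [hvE hn, ← (hstepE n hn).1, h1]
          rcases eq_or_lt_of_le (show k+1 ≤ n by omega) with h' | h'
          · subst h'
            exact (hstepE (k+1) hk1).2 h2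
          · exact hinj h' (by omega) (hvk1.trans hvn.symm)
        · exact hinj (show k < n+1 by omega) hml (hvk.trans hvm.symm)
  have hsign : ((-1:ℝ)^l) = ((-1:ℝ)^k) := by
    by_cases h : Even k
    · rw [h.neg_one_pow, (hEkl.mp h).neg_one_pow]
    · rw [(Nat.not_even_iff_odd.mp h).neg_one_pow,
        (Nat.not_even_iff_odd.mp (fun hh => h (hEkl.mpr hh))).neg_one_pow]
  refine ⟨d, ?_, ?_, ?_, ?_⟩
  · -- d ≠ 0
    intro h0
    have hz : ∀ m ∈ Finset.Ico (k+1) (l+1), m ≠ k+1 →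
        ((-1:ℝ)^m) * (if W m = ((W (k+1)).1, (W (k+1)).2) then 1 else 0) = 0 := by
      intro m hm hne
      have hm' := Finset.mem_Ico.mp hm
      have hW := hedge m hm'.1 (by omega) hne
      have : W m ≠ ((W (k+1)).1, (W (k+1)).2) := by simpa using hW
      simp [this]
    have hval : d (W (k+1)).1 (W (k+1)).2 = ((-1:ℝ)^(k+1)) := by
      simp only [hddef]
      rw [Finset.sum_eq_single_of_mem (k+1)
        (Finset.mem_Ico.mpr ⟨le_refl _, by omega⟩) hz]
      simp
    rw [h0] at hval
    simp at hval
    exact pow_ne_zero (k+1) (by norm_num : (-1:ℝ) ≠ 0) hval.symm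
  · -- support
    intro a b hI
    simp only [hddef]
    apply Finset.sum_eq_zero
    intro m _
    have : W m ≠ (a, b) := by
      intro h
      exact hWf m (by rw [h]; exact hI)
    simp [this]
  · -- column sums
    intro b
    set g : ℕ → ℝ := fun n => if v n = Sum.inr b then 1 else 0 with hgdef
    have claim : ∀ n, (if (W (n+1)).2 = b then (1:ℝ) else 0) = g (n+1) + g n := by
      intro n
      by_cases hn : Even n
      · have hn1 : ¬ Even (n+1) := by simp [Nat.even_add_one, hn]
        have h1 : g (n+1) = if (W (n+1)).2 = b then 1 else 0 := by
          simp only [hgdef, hvO hn1]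
          by_cases h : (W (n+1)).2 = b <;> simp [h]
        have h2 : g n = 0 := by
          simp only [hgdef, hvE hn]
          simp
        rw [h1, h2, add_zero]
      · have hn1 : Even (n+1) := by simpa [Nat.even_add_one] using hn
        have h1 : g (n+1) = 0 := by
          simp only [hgdef, hvE hn1]
          simp
        have h2 : g n = if (W (n+1)).2 = b then 1 else 0 := by
          simp only [hgdef, hvO hn]
          rw [(hstepO n hn).1]
          by_cases h : (W n).2 = b <;> simp [h]
        rw [h1, h2, zero_add]
    have hsum : (∑ a, d a b)
        = ∑ m ∈ Finset.Ico (k+1) (l+1), ((-1:ℝ)^m) * (if (W m).2 = b then 1 else 0) := by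
      simp only [hddef]
      rw [Finset.sum_comm]
      apply Finset.sum_congr rfl
      intro m _
      rw [← Finset.mul_sum]
      congr 1
      by_cases h : (W m).2 = b
      · simp only [Prod.ext_iff, h, and_true, if_pos]
        rw [Finset.sum_ite_eq (Finset.univ) (W m).1 (fun _ => (1:ℝ))]
        simp
      · rw [Finset.sum_eq_zero, if_neg h]
        intro a _
        have : W m ≠ (a, b) := fun hh => h (by rw [hh])
        simp [this]
    set F : ℕ → ℝ := fun n => ((-1:ℝ)^n) * g n with hFdef
    have hterm : ∀ i, ((-1:ℝ)^(k+1+i)) * (if (W (k+1+i)).2 = b then 1 else 0)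
        = F (k + (i+1)) - F (k + i) := by
      intro i
      have hidx : k + 1 + i = (k + i) + 1 := by omega
      have hidx2 : k + (i + 1) = (k + i) + 1 := by omega
      rw [hidx, claim (k+i), hidx2]
      simp only [hFdef]
      rw [pow_succ]
      ring
    have htel : ∑ i ∈ Finset.range (l - k), (F (k + (i+1)) - F (k + i))
        = F (k + (l - k)) - F (k + 0) := Finset.sum_range_sub (fun i => F (k + i)) (l - k)
    rw [hsum, Finset.sum_Ico_eq_sum_range]
    have hlk : l + 1 - (k + 1) = l - k := by omega
    rw [hlk]
    rw [Finset.sum_congr rfl (fun i _ => hterm i), htel]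
    have hkl' : k + (l - k) = l := by omega
    rw [hkl', Nat.add_zero]
    have hgkl : g l = g k := by simp only [hgdef]; rw [hvkl]
    simp only [hFdef]
    rw [hgkl, hsign]
    ring
  · -- row sums
    intro a
    set g : ℕ → ℝ := fun n => if v n = Sum.inl a then 1 else 0 with hgdef
    have claim : ∀ n, (if (W (n+1)).1 = a then (1:ℝ) else 0) = g (n+1) + g n := by
      intro n
      by_cases hn : Even n
      · have hn1 : ¬ Even (n+1) := by simp [Nat.even_add_one, hn]
        have h1 : g (n+1) = 0 := by
          simp only [hgdef, hvO hn1]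
          simp
        have h2 : g n = if (W (n+1)).1 = a then 1 else 0 := by
          simp only [hgdef, hvE hn]
          rw [(hstepE n hn).1]
          by_cases h : (W n).1 = a <;> simp [h]
        rw [h1, h2, zero_add]
      · have hn1 : Even (n+1) := by simpa [Nat.even_add_one] using hn
        have h1 : g (n+1) = if (W (n+1)).1 = a then 1 else 0 := by
          simp only [hgdef, hvE hn1]
          by_cases h : (W (n+1)).1 = a <;> simp [h]
        have h2 : g n = 0 := by
          simp only [hgdef, hvO hn]
          simp
        rw [h1, h2, add_zero]
    have hsum : (∑ b, d a b)
        = ∑ m ∈ Finset.Ico (k+1) (l+1), ((-1:ℝ)^m) * (if (W m).1 = a then 1 else 0) := by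
      simp only [hddef]
      rw [Finset.sum_comm]
      apply Finset.sum_congr rfl
      intro m _
      rw [← Finset.mul_sum]
      congr 1
      by_cases h : (W m).1 = a
      · simp only [Prod.ext_iff, h, true_and, if_pos]
        rw [Finset.sum_ite_eq (Finset.univ) (W m).2 (fun _ => (1:ℝ))]
        simp
      · rw [Finset.sum_eq_zero, if_neg h]
        intro b _
        have : W m ≠ (a, b) := fun hh => h (by rw [hh])
        simp [this]
    set F : ℕ → ℝ := fun n => ((-1:ℝ)^n) * g n with hFdef
    have hterm : ∀ i, ((-1:ℝ)^(k+1+i)) * (if (W (k+1+i)).1 = a then 1 else 0)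
        = F (k + (i+1)) - F (k + i) := by
      intro i
      have hidx : k + 1 + i = (k + i) + 1 := by omega
      have hidx2 : k + (i + 1) = (k + i) + 1 := by omega
      rw [hidx, claim (k+i), hidx2]
      simp only [hFdef]
      rw [pow_succ]
      ring
    have htel : ∑ i ∈ Finset.range (l - k), (F (k + (i+1)) - F (k + i))
        = F (k + (l - k)) - F (k + 0) := Finset.sum_range_sub (fun i => F (k + i)) (l - k)
    rw [hsum, Finset.sum_Ico_eq_sum_range]
    have hlk : l + 1 - (k + 1) = l - k := by omega
    rw [hlk]
    rw [Finset.sum_congr rfl (fun i _ => hterm i), htel]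
    have hkl' : k + (l - k) = l := by omega
    rw [hkl', Nat.add_zero]
    have hgkl : g l = g k := by simp only [hgdef]; rw [hvkl]
    simp only [hFdef]
    rw [hgkl, hsign]
    ring
end Base

lemma isInt_zero : IsInt 0 := ⟨0, by simp⟩

section Colored
variable {S P H : Type*} [Fintype S] [Fintype P] [Fintype H] [DecidableEq H]

/-- per-cluster per-color sums -/
def csum (χ : P → H) (x : S → P → ℝ) (i : S) (h : H) : ℝ := ∑ j, if χ j = h then x i j else 0

lemma key_colored (χ : P → H) (x : S → P → ℝ)
    (hcol : ∀ j, IsInt (∑ i, x i j)) (hrow : ∀ i, IsInt (∑ j, x i j))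
    (i0 : S) (j0 : P) (h00 : ¬ IsInt (x i0 j0)) :
    ∃ d : S → P → ℝ, d ≠ 0 ∧ (∀ i j, IsInt (x i j) → d i j = 0) ∧
      (∀ j, ∑ i, d i j = 0) ∧ (∀ i, ∑ j, d i j = 0) ∧
      (∀ i h, IsInt (csum χ x i h) → csum χ d i h = 0) := by
  classical
  set T : S → H → Prop := fun i h => IsInt (csum χ x i h) with hTdef
  set M : ((S × H) ⊕ S) → P → ℝ := fun v j =>
    Sum.elim (fun p => if T p.1 p.2 ∧ χ j = p.2 then x p.1 j else 0)
      (fun i => if ¬ T i (χ j) then x i j else 0) v with hMdef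
  -- helper : commuting sums over colors
  have hcollapse : ∀ (i : S) (j : P),
      (∑ h, if T i h ∧ χ j = h then x i j else 0) = (if T i (χ j) then x i j else 0) := by
    intro i j
    have : ∀ h, (if T i h ∧ χ j = h then x i j else 0)
        = (if χ j = h then (if T i h then x i j else 0) else 0) := by
      intro h
      by_cases h1 : T i h <;> by_cases h2 : χ j = h <;> simp [h1, h2]
    rw [Finset.sum_congr rfl (fun h _ => this h)]
    rw [Finset.sum_ite_eq Finset.univ (χ j) (fun h => if T i h then x i j else 0)]
    simp
  have hMrow : ∀ v, IsInt (∑ j, M v j) := by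
    intro v
    rcases v with ⟨i, h⟩ | i
    · by_cases hT : T i h
      · have : (∑ j, M (Sum.inl (i, h)) j) = csum χ x i h := by
          simp only [hMdef, Sum.elim_inl, hT, true_and]
          rfl
        rw [this]; exact hT
      · have : (∑ j, M (Sum.inl (i, h)) j) = 0 := by
          apply Finset.sum_eq_zero
          intro j _
          simp [hMdef, hT]
        rw [this]; exact isInt_zero
    · have hsplit : ∀ j, M (Sum.inr i) j = x i j - (if T i (χ j) then x i j else 0) := by
        intro j
        by_cases hT : T i (χ j) <;> simp [hMdef, hT]
      have h2 : (∑ j, (if T i (χ j) then x i j else 0))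
          = ∑ h, (if T i h then csum χ x i h else 0) := by
        have : ∀ h : H, (if T i h then csum χ x i h else 0)
            = ∑ j, (if T i h ∧ χ j = h then x i j else 0) := by
          intro h
          by_cases hT : T i h
          · simp only [hT, if_pos, true_and]; rfl
          · simp [hT]
        rw [Finset.sum_congr rfl (fun h _ => this h), Finset.sum_comm]
        exact Finset.sum_congr rfl (fun j _ => (hcollapse i j).symm)
      rw [Finset.sum_congr rfl (fun j _ => hsplit j), Finset.sum_sub_distrib, h2]
      exact (hrow i).sub (isInt_sum (fun h _ => by
        by_cases hT : T i h
        · rw [if_pos hT]; exact hT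
        · rw [if_neg hT]; exact isInt_zero))
  have hMcol : ∀ j, IsInt (∑ v, M v j) := by
    intro j
    rw [Fintype.sum_sum_type]
    have h1 : (∑ p : S × H, M (Sum.inl p) j) = ∑ i, (if T i (χ j) then x i j else 0) := by
      rw [Fintype.sum_prod_type]
      exact Finset.sum_congr rfl (fun i _ => by
        simpa [hMdef] using hcollapse i j)
    have h2 : (∑ i, M (Sum.inr i) j) = ∑ i, (if ¬ T i (χ j) then x i j else 0) := rfl
    rw [h1, h2, ← Finset.sum_add_distrib]
    have : ∀ i, (if T i (χ j) then x i j else 0) + (if ¬ T i (χ j) then x i j else 0) = x i j := by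
      intro i; by_cases hT : T i (χ j) <;> simp [hT]
    rw [Finset.sum_congr rfl (fun i _ => this i)]
    exact hcol j
  -- fractional starting entry
  have hstart : ∃ v, ¬ IsInt (M v j0) := by
    by_cases hT : T i0 (χ j0)
    · exact ⟨Sum.inl (i0, χ j0), by simpa [hMdef, hT] using h00⟩
    · exact ⟨Sum.inr i0, by simpa [hMdef, hT] using h00⟩
  obtain ⟨v0, hv0⟩ := hstart
  obtain ⟨D, hD0, hDsupp, hDcol, hDrow⟩ := base_lemma M hMrow hMcol (v0, j0) hv0
  -- structure of the support of D
  have hstruct1 : ∀ i h j, D (Sum.inl (i, h)) j ≠ 0 → T i h ∧ χ j = h := by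
    intro i h j hD
    by_contra hc
    exact hD (hDsupp _ _ (by simp [hMdef, hc, isInt_zero]))
  have hstruct2 : ∀ i j, D (Sum.inr i) j ≠ 0 → ¬ T i (χ j) := by
    intro i j hD hT
    exact hD (hDsupp _ _ (by simp [hMdef, hT, isInt_zero]))
  set node : S → P → (S × H) ⊕ S := fun i j =>
    if T i (χ j) then Sum.inl (i, χ j) else Sum.inr i with hnodedef
  set d : S → P → ℝ := fun i j => D (node i j) j with hddef
  have hnode1 : ∀ i h j, D (Sum.inl (i, h)) j ≠ 0 → node i j = Sum.inl (i, h) := by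
    intro i h j hD
    obtain ⟨hT, hχ⟩ := hstruct1 i h j hD
    simp only [hnodedef]
    rw [hχ, if_pos hT]
  have hnode2 : ∀ i j, D (Sum.inr i) j ≠ 0 → node i j = Sum.inr i := by
    intro i j hD
    simp only [hnodedef]
    rw [if_neg (hstruct2 i j hD)]
  refine ⟨d, ?_, ?_, ?_, ?_, ?_⟩
  · -- d ≠ 0
    intro hd
    apply hD0
    funext v j
    have hd0 : ∀ i j, d i j = 0 := fun i j => by rw [hd]; rfl
    by_contra hD
    rcases v with ⟨i, h⟩ | i
    · have hn := hnode1 i h j hD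
      have hdd : d i j = D (Sum.inl (i, h)) j := by
        simp only [hddef]; rw [hn]
      exact hD (by rw [← hdd]; exact hd0 i j)
    · have hn := hnode2 i j hD
      have hdd : d i j = D (Sum.inr i) j := by
        simp only [hddef]; rw [hn]
      exact hD (by rw [← hdd]; exact hd0 i j)
  · -- support
    intro i j hI
    by_cases hT : T i (χ j)
    · have : d i j = D (Sum.inl (i, χ j)) j := by simp [hddef, hnodedef, hT]
      rw [this]
      exact hDsupp _ _ (by simpa [hMdef, hT] using hI)
    · have : d i j = D (Sum.inr i) j := by simp [hddef, hnodedef, hT]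
      rw [this]
      exact hDsupp _ _ (by simpa [hMdef, hT] using hI)
  · -- column sums
    intro j
    have hretr : ∀ i, Sum.elim (fun p : S × H => p.1) (fun i : S => i) (node i j) = i := by
      intro i
      by_cases hT : T i (χ j) <;> simp [hnodedef, hT]
    have hinj : ∀ i1 ∈ Finset.univ, ∀ i2 ∈ Finset.univ,
        node i1 j = node i2 j → (i1 : S) = i2 := by
      intro i1 _ i2 _ he
      rw [← hretr i1, ← hretr i2, he]
    have himg : ∑ v ∈ Finset.image (fun i => node i j) Finset.univ, D v j
        = ∑ i, D (node i j) j := Finset.sum_image (f := fun v => D v j) hinj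
    have hout : ∀ v ∈ (Finset.univ : Finset ((S × H) ⊕ S)),
        v ∉ Finset.image (fun i => node i j) Finset.univ → D v j = 0 := by
      intro v _ hv
      by_contra hD
      apply hv
      rcases v with ⟨i, h⟩ | i
      · exact Finset.mem_image.mpr ⟨i, Finset.mem_univ i, hnode1 i h j hD⟩
      · exact Finset.mem_image.mpr ⟨i, Finset.mem_univ i, hnode2 i j hD⟩
    have := Finset.sum_subset (Finset.subset_univ _) hout
    calc (∑ i, d i j) = ∑ i, D (node i j) j := rfl
      _ = ∑ v ∈ Finset.image (fun i => node i j) Finset.univ, D v j := himg.symm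
      _ = ∑ v, D v j := this
      _ = 0 := hDcol j
  · -- row sums
    intro i
    have hper : ∀ j, d i j = D (Sum.inr i) j + ∑ h, D (Sum.inl (i, h)) j := by
      intro j
      by_cases hT : T i (χ j)
      · have h1 : D (Sum.inr i) j = 0 := by
          by_contra hD; exact hstruct2 i j hD hT
        have h2 : (∑ h, D (Sum.inl (i, h)) j) = D (Sum.inl (i, χ j)) j := by
          apply Finset.sum_eq_single_of_mem (χ j) (Finset.mem_univ _)
          intro h _ hne
          by_contra hD
          exact hne (hstruct1 i h j hD).2.symm
        rw [h1, h2, zero_add]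
        simp [hddef, hnodedef, hT]
      · have h2 : (∑ h, D (Sum.inl (i, h)) j) = 0 := by
          apply Finset.sum_eq_zero
          intro h _
          by_contra hD
          obtain ⟨hT', hχ⟩ := hstruct1 i h j hD
          exact hT (hχ ▸ hT')
        rw [h2, add_zero]
        simp [hddef, hnodedef, hT]
    rw [Finset.sum_congr rfl (fun j _ => hper j), Finset.sum_add_distrib]
    rw [hDrow (Sum.inr i), Finset.sum_comm]
    rw [Finset.sum_congr rfl (fun h (_ : h ∈ Finset.univ) => hDrow (Sum.inl (i, h)))]
    simp
  · -- tight color sums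
    intro i h hT
    have hTih : T i h := hT
    have hper : ∀ j, (if χ j = h then d i j else 0) = D (Sum.inl (i, h)) j := by
      intro j
      by_cases hχ : χ j = h
      · rw [if_pos hχ]
        have hn : node i j = Sum.inl (i, h) := by
          simp only [hnodedef]
          rw [hχ, if_pos hTih]
        simp only [hddef]
        rw [hn]
      · rw [if_neg hχ]
        by_contra hD
        exact hχ (hstruct1 i h j (Ne.symm hD)).2
    have : csum χ d i h = ∑ j, D (Sum.inl (i, h)) j := by
      unfold csum
      exact Finset.sum_congr rfl (fun j _ => hper j)
    rw [this, hDrow]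
end Colored

lemma ceil_of_isInt {r : ℝ} (h : IsInt r) : (⌈r⌉ : ℝ) = r := by
  obtain ⟨z, rfl⟩ := h; simp

lemma isInt_one' : IsInt 1 := ⟨1, by simp⟩

lemma isInt_natCast (n : ℕ) : IsInt (n : ℝ) := ⟨n, by push_cast; ring⟩

section Perturb
variable {S P H : Type*} [Fintype S] [Fintype P] [Fintype H] [DecidableEq H] [DecidableEq S]

variable (χ : P → H) (x : S → P → ℝ)

/-- ceiling slack of a color sum -/
def eI (i : S) (h : H) : ℝ := (⌈csum χ x i h⌉ : ℝ) - csum χ x i h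
/-- twin row total before its own slack column -/
def Rtw (i : S) : ℝ := ∑ h, (1 - eI χ x i h)
/-- ceiling slack of twin rows -/
def gT (i : S) : ℝ := (⌈Rtw χ x i⌉ : ℝ) - Rtw χ x i

/-- the augmented matrix -/
def aug : Option (S ⊕ S) → (P ⊕ ((S × H) ⊕ S)) → ℝ
  | some (Sum.inl i), Sum.inl j => x i j
  | some (Sum.inl i), Sum.inr (Sum.inl q) => if i = q.1 then eI χ x q.1 q.2 else 0
  | some (Sum.inl _), Sum.inr (Sum.inr _) => 0
  | some (Sum.inr _), Sum.inl _ => 0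
  | some (Sum.inr i), Sum.inr (Sum.inl q) => if i = q.1 then 1 - eI χ x q.1 q.2 else 0
  | some (Sum.inr i), Sum.inr (Sum.inr i') => if i = i' then gT χ x i' else 0
  | none, Sum.inl _ => 0
  | none, Sum.inr (Sum.inl _) => 0
  | none, Sum.inr (Sum.inr i') => 1 - gT χ x i'

/-- colors on the augmented point set -/
def chiAug : (P ⊕ ((S × H) ⊕ S)) → Option H
  | Sum.inl j => some (χ j)
  | Sum.inr (Sum.inl q) => some q.2
  | Sum.inr (Sum.inr _) => none

lemma csum_total (i : S) : ∑ h, csum χ x i h = ∑ j, x i j := by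
  unfold csum
  rw [Finset.sum_comm]
  apply Finset.sum_congr rfl
  intro j _
  rw [Finset.sum_ite_eq Finset.univ (χ j) (fun _ => x i j)]
  simp

lemma aug_col (hx1 : ∀ j, ∑ i, x i j = 1) :
    ∀ p, (∑ s, aug χ x s p) = 1 := by
  intro p
  rw [Fintype.sum_option, Fintype.sum_sum_type]
  rcases p with j | (q | i')
  · simp [aug, hx1 j]
  · obtain ⟨i', h⟩ := q
    simp only [aug]
    rw [Finset.sum_ite_eq' Finset.univ i' (fun _ => eI χ x i' h),
      Finset.sum_ite_eq' Finset.univ i' (fun _ => 1 - eI χ x i' h)]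
    simp
  · simp only [aug]
    rw [Finset.sum_eq_zero (fun i _ => rfl),
      Finset.sum_ite_eq' Finset.univ i' (fun _ => gT χ x i')]
    simp

lemma aug_row (hx1 : ∀ j, ∑ i, x i j = 1) :
    ∀ s, IsInt (∑ p, aug χ x s p) := by
  intro s
  rw [Fintype.sum_sum_type]
  rcases s with _ | (i | i)
  · -- the z row
    have h1 : (∑ j, aug χ x none (Sum.inl j)) = 0 := Finset.sum_eq_zero (fun j _ => rfl)
    have h2 : (∑ q : (S × H) ⊕ S, aug χ x none (Sum.inr q))
        = ∑ i : S, (1 - gT χ x i) := by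
      rw [Fintype.sum_sum_type]
      rw [Finset.sum_eq_zero (fun q (_ : q ∈ Finset.univ) => (rfl : aug χ x none (Sum.inr (Sum.inl q)) = 0))]
      simp [aug]
    rw [h1, h2, zero_add]
    have hsub : ∀ i : S, (1 : ℝ) - gT χ x i = (1 - (⌈Rtw χ x i⌉:ℝ)) + Rtw χ x i := by
      intro i; unfold gT; ring
    rw [Finset.sum_congr rfl (fun i _ => hsub i), Finset.sum_add_distrib]
    apply IsInt.add
    · exact isInt_sum (fun i _ => IsInt.sub isInt_one' ⟨_, rfl⟩)
    · -- ∑ i, Rtw is an integer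
      have hR : ∀ i, Rtw χ x i = (∑ h, (1 - (⌈csum χ x i h⌉:ℝ))) + ∑ j, x i j := by
        intro i
        unfold Rtw eI
        rw [← csum_total χ x i, ← Finset.sum_add_distrib]
        apply Finset.sum_congr rfl
        intro h _
        ring
      rw [Finset.sum_congr rfl (fun i _ => hR i), Finset.sum_add_distrib]
      apply IsInt.add
      · exact isInt_sum (fun i _ => isInt_sum (fun h _ =>
          IsInt.sub isInt_one' ⟨_, rfl⟩))
      · have : (∑ i, ∑ j, x i j) = (Fintype.card P : ℝ) := by
          rw [Finset.sum_comm]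
          rw [Finset.sum_congr rfl (fun j (_ : j ∈ Finset.univ) => hx1 j)]
          rw [Finset.sum_const, Finset.card_univ, nsmul_eq_mul, mul_one]
        rw [this]; exact isInt_natCast _
  · -- a real row
    have h1 : (∑ j, aug χ x (some (Sum.inl i)) (Sum.inl j)) = ∑ j, x i j := rfl
    have h2 : (∑ q : (S × H) ⊕ S, aug χ x (some (Sum.inl i)) (Sum.inr q))
        = ∑ h, eI χ x i h := by
      rw [Fintype.sum_sum_type]
      have ha : (∑ q : S × H, aug χ x (some (Sum.inl i)) (Sum.inr (Sum.inl q)))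
          = ∑ h, eI χ x i h := by
        rw [Fintype.sum_prod_type]
        rw [Finset.sum_comm]
        apply Finset.sum_congr rfl
        intro h _
        show (∑ i', if i = i' then eI χ x i' h else 0) = eI χ x i h
        rw [Finset.sum_ite_eq Finset.univ i (fun i' => eI χ x i' h)]
        simp
      rw [ha, Finset.sum_eq_zero (fun i' (_ : i' ∈ Finset.univ) =>
        (rfl : aug χ x (some (Sum.inl i)) (Sum.inr (Sum.inr i')) = 0))]
      simp
    rw [h1, h2]
    have : (∑ j, x i j) + (∑ h, eI χ x i h) = ∑ h, (⌈csum χ x i h⌉ : ℝ) := by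
      rw [← csum_total χ x i, ← Finset.sum_add_distrib]
      apply Finset.sum_congr rfl
      intro h _
      unfold eI
      ring
    rw [this]
    exact isInt_sum (fun h _ => ⟨_, rfl⟩)
  · -- a twin row
    have h1 : (∑ j, aug χ x (some (Sum.inr i)) (Sum.inl j)) = 0 :=
      Finset.sum_eq_zero (fun j _ => rfl)
    have h2 : (∑ q : (S × H) ⊕ S, aug χ x (some (Sum.inr i)) (Sum.inr q))
        = Rtw χ x i + gT χ x i := by
      rw [Fintype.sum_sum_type]
      have ha : (∑ q : S × H, aug χ x (some (Sum.inr i)) (Sum.inr (Sum.inl q)))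
          = Rtw χ x i := by
        rw [Fintype.sum_prod_type]
        unfold Rtw
        rw [Finset.sum_comm]
        apply Finset.sum_congr rfl
        intro h _
        show (∑ i', if i = i' then 1 - eI χ x i' h else 0) = 1 - eI χ x i h
        rw [Finset.sum_ite_eq Finset.univ i (fun i' => 1 - eI χ x i' h)]
        simp
      have hb : (∑ i' : S, aug χ x (some (Sum.inr i)) (Sum.inr (Sum.inr i')))
          = gT χ x i := by
        show (∑ i', if i = i' then gT χ x i' else 0) = gT χ x i
        rw [Finset.sum_ite_eq Finset.univ i (fun i' => gT χ x i')]
        simp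
      rw [ha, hb]
    rw [h1, h2, zero_add]
    have : Rtw χ x i + gT χ x i = (⌈Rtw χ x i⌉ : ℝ) := by unfold gT; ring
    rw [this]
    exact ⟨_, rfl⟩


lemma Rtw_eq (i : S) :
    Rtw χ x i = (∑ h, (1 - (⌈csum χ x i h⌉:ℝ))) + ∑ j, x i j := by
  unfold Rtw eI
  rw [← csum_total χ x i, ← Finset.sum_add_distrib]
  apply Finset.sum_congr rfl
  intro h _
  ring

lemma perturb (hx1 : ∀ j, ∑ i, x i j = 1) (i0 : S) (j0 : P) (h00 : ¬ IsInt (x i0 j0)) :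
    ∃ d : S → P → ℝ, d ≠ 0 ∧ (∀ i j, IsInt (x i j) → d i j = 0) ∧
      (∀ j, ∑ i, d i j = 0) ∧
      (∀ i, IsInt (∑ j, x i j) → ∑ j, d i j = 0) ∧
      (∀ i h, IsInt (csum χ x i h) → csum χ d i h = 0) := by
  classical
  obtain ⟨D, hD0, hDsupp, hDcol, hDrow, hDcsum⟩ :=
    key_colored (chiAug χ) (aug χ x)
      (fun p => by rw [aug_col χ x hx1 p]; exact isInt_one')
      (aug_row χ x hx1)
      (some (Sum.inl i0)) (Sum.inl j0) h00
  set d : S → P → ℝ := fun i j => D (some (Sum.inl i)) (Sum.inl j) with hddef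
  -- basic vanishing facts from the support property
  have hz_twin_col : ∀ i j, D (some (Sum.inr i)) (Sum.inl j) = 0 :=
    fun i j => hDsupp _ _ isInt_zero
  have hz_none_col : ∀ j, D none (Sum.inl j) = 0 :=
    fun j => hDsupp _ _ isInt_zero
  have hz_real_t : ∀ i i', D (some (Sum.inl i)) (Sum.inr (Sum.inr i')) = 0 :=
    fun i i' => hDsupp _ _ isInt_zero
  have hz_none_p : ∀ q, D none (Sum.inr (Sum.inl q)) = 0 :=
    fun q => hDsupp _ _ isInt_zero
  have hz_real_p_ne : ∀ i i' h, i ≠ i' →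
      D (some (Sum.inl i)) (Sum.inr (Sum.inl (i', h))) = 0 := by
    intro i i' h hne
    exact hDsupp _ _ (by simp only [aug, if_neg hne]; exact isInt_zero)
  have hz_twin_p_ne : ∀ i i' h, i ≠ i' →
      D (some (Sum.inr i)) (Sum.inr (Sum.inl (i', h))) = 0 := by
    intro i i' h hne
    exact hDsupp _ _ (by simp only [aug, if_neg hne]; exact isInt_zero)
  have hz_twin_t_ne : ∀ i i', i ≠ i' →
      D (some (Sum.inr i)) (Sum.inr (Sum.inr i')) = 0 := by
    intro i i' hne
    exact hDsupp _ _ (by simp only [aug, if_neg hne]; exact isInt_zero)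
  -- expanded column sums
  have hcolD : ∀ p, D none p + ((∑ i, D (some (Sum.inl i)) p) + (∑ i, D (some (Sum.inr i)) p)) = 0 := by
    intro p
    have h0 := hDcol p
    rw [Fintype.sum_option, Fintype.sum_sum_type] at h0
    exact h0
  -- expanded row sums
  have hrowD : ∀ s, (∑ j, D s (Sum.inl j)) +
      ((∑ q : S × H, D s (Sum.inr (Sum.inl q))) + (∑ i', D s (Sum.inr (Sum.inr i')))) = 0 := by
    intro s
    have h0 := hDrow s
    rw [Fintype.sum_sum_type, Fintype.sum_sum_type] at h0
    exact h0
  -- reduction of p-column sums over the first index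
  have hsingle_real : ∀ i h, (∑ i', D (some (Sum.inl i')) (Sum.inr (Sum.inl (i, h))))
      = D (some (Sum.inl i)) (Sum.inr (Sum.inl (i, h))) := by
    intro i h
    exact Finset.sum_eq_single_of_mem i (Finset.mem_univ i)
      (fun i' _ hne => hz_real_p_ne i' i h hne)
  have hsingle_twin : ∀ i h, (∑ i', D (some (Sum.inr i')) (Sum.inr (Sum.inl (i, h))))
      = D (some (Sum.inr i)) (Sum.inr (Sum.inl (i, h))) := by
    intro i h
    exact Finset.sum_eq_single_of_mem i (Finset.mem_univ i)
      (fun i' _ hne => hz_twin_p_ne i' i h hne)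
  have hsingle_twin_t : ∀ i, (∑ i', D (some (Sum.inr i')) (Sum.inr (Sum.inr i)))
      = D (some (Sum.inr i)) (Sum.inr (Sum.inr i)) := by
    intro i
    exact Finset.sum_eq_single_of_mem i (Finset.mem_univ i)
      (fun i' _ hne => hz_twin_t_ne i' i hne)
  have hsingle_colreal : ∀ i h, (∑ i', D (some (Sum.inl i)) (Sum.inr (Sum.inl (i', h))))
      = D (some (Sum.inl i)) (Sum.inr (Sum.inl (i, h))) := by
    intro i h
    exact Finset.sum_eq_single_of_mem i (Finset.mem_univ i)
      (fun i' _ hne => hz_real_p_ne i i' h (Ne.symm hne))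
  -- column relation at the p columns
  have hcolp : ∀ i h, D (some (Sum.inl i)) (Sum.inr (Sum.inl (i, h)))
      + D (some (Sum.inr i)) (Sum.inr (Sum.inl (i, h))) = 0 := by
    intro i h
    have h0 := hcolD (Sum.inr (Sum.inl (i, h)))
    rw [hz_none_p, hsingle_real, hsingle_twin] at h0
    linarith
  -- expansion of D color sums at real rows
  have hcsumD : ∀ i h, csum (chiAug χ) D (some (Sum.inl i)) (some h)
      = csum χ d i h + ∑ i', D (some (Sum.inl i)) (Sum.inr (Sum.inl (i', h))) := by
    intro i h
    unfold csum
    rw [Fintype.sum_sum_type, Fintype.sum_sum_type]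
    have h1 : (∑ j, if chiAug (S := S) χ (Sum.inl j) = some h then D (some (Sum.inl i)) (Sum.inl j) else 0)
        = ∑ j, if χ j = h then d i j else 0 := by
      apply Finset.sum_congr rfl
      intro j _
      simp [chiAug, hddef]
    have h2 : (∑ q : S × H, if chiAug (S := S) χ (Sum.inr (Sum.inl q)) = some h
          then D (some (Sum.inl i)) (Sum.inr (Sum.inl q)) else 0)
        = ∑ i', D (some (Sum.inl i)) (Sum.inr (Sum.inl (i', h))) := by
      rw [Fintype.sum_prod_type]
      apply Finset.sum_congr rfl
      intro i' _
      have : ∀ h', (if chiAug (S := S) χ (Sum.inr (Sum.inl (i', h'))) = some h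
          then D (some (Sum.inl i)) (Sum.inr (Sum.inl (i', h'))) else 0)
          = (if h' = h then D (some (Sum.inl i)) (Sum.inr (Sum.inl (i', h'))) else 0) := by
        intro h'
        simp [chiAug]
      rw [Finset.sum_congr rfl (fun h' _ => this h')]
      rw [Finset.sum_ite_eq' Finset.univ h (fun h' => D (some (Sum.inl i)) (Sum.inr (Sum.inl (i', h'))))]
      simp
    have h3 : (∑ i' : S, if chiAug (S := S) χ (Sum.inr (Sum.inr i')) = some h
          then D (some (Sum.inl i)) (Sum.inr (Sum.inr i')) else 0) = 0 := by
      apply Finset.sum_eq_zero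
      intro i' _
      simp [chiAug]
    rw [h1, h2, h3, add_zero]
  -- value of aug color sums at real rows
  have hYcsum_real : ∀ i h, csum (chiAug χ) (aug χ x) (some (Sum.inl i)) (some h)
      = (⌈csum χ x i h⌉ : ℝ) := by
    intro i h
    have hexp : csum (chiAug χ) (aug χ x) (some (Sum.inl i)) (some h)
        = ∑ p' : P ⊕ ((S × H) ⊕ S), if chiAug (S := S) χ p' = some h
            then aug χ x (some (Sum.inl i)) p' else 0 := rfl
    rw [hexp, Fintype.sum_sum_type, Fintype.sum_sum_type]
    have h1 : (∑ j, if chiAug (S := S) χ (Sum.inl j) = some h then aug χ x (some (Sum.inl i)) (Sum.inl j) else 0)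
        = csum χ x i h := by
      unfold csum
      apply Finset.sum_congr rfl
      intro j _
      simp [chiAug, aug]
    have h2 : (∑ q : S × H, if chiAug (S := S) χ (Sum.inr (Sum.inl q)) = some h
          then aug χ x (some (Sum.inl i)) (Sum.inr (Sum.inl q)) else 0)
        = eI χ x i h := by
      rw [Fintype.sum_prod_type]
      have hinner : ∀ i', (∑ h' : H, if chiAug (S := S) χ (Sum.inr (Sum.inl (i', h'))) = some h
          then aug χ x (some (Sum.inl i)) (Sum.inr (Sum.inl (i', h'))) else 0)
          = (if i = i' then eI χ x i' h else 0) := by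
        intro i'
        have : ∀ h', (if chiAug (S := S) χ (Sum.inr (Sum.inl (i', h'))) = some h
            then aug χ x (some (Sum.inl i)) (Sum.inr (Sum.inl (i', h'))) else 0)
            = (if h' = h then (if i = i' then eI χ x i' h' else 0) else 0) := by
          intro h'
          simp [chiAug, aug]
        rw [Finset.sum_congr rfl (fun h' _ => this h')]
        rw [Finset.sum_ite_eq' Finset.univ h (fun h' => if i = i' then eI χ x i' h' else 0)]
        simp
      rw [Finset.sum_congr rfl (fun i' _ => hinner i')]
      rw [Finset.sum_ite_eq Finset.univ i (fun i' => eI χ x i' h)]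
      simp
    have h3 : (∑ i' : S, if chiAug (S := S) χ (Sum.inr (Sum.inr i')) = some h
          then aug χ x (some (Sum.inl i)) (Sum.inr (Sum.inr i')) else 0) = 0 := by
      apply Finset.sum_eq_zero
      intro i' _
      simp [chiAug]
    rw [h1, h2, h3, add_zero]
    unfold eI
    ring
  -- color sums of D at real rows vanish (they are always tight)
  have hDcsum_real : ∀ i h, csum χ d i h
      + ∑ i', D (some (Sum.inl i)) (Sum.inr (Sum.inl (i', h))) = 0 := by
    intro i h
    rw [← hcsumD i h]
    exact hDcsum _ _ (by rw [hYcsum_real]; exact ⟨_, rfl⟩)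
  refine ⟨d, ?_, ?_, ?_, ?_, ?_⟩
  · -- d ≠ 0
    intro hd
    have hd0 : ∀ i j, d i j = 0 := fun i j => by rw [hd]; rfl
    have hcsumd0 : ∀ i h, csum χ d i h = 0 := by
      intro i h
      unfold csum
      exact Finset.sum_eq_zero (fun j _ => by rw [hd0]; simp)
    have hA : ∀ i h, D (some (Sum.inl i)) (Sum.inr (Sum.inl (i, h))) = 0 := by
      intro i h
      have := hDcsum_real i h
      rw [hcsumd0, hsingle_colreal, zero_add] at this
      exact this
    have hA' : ∀ i i' h, D (some (Sum.inl i)) (Sum.inr (Sum.inl (i', h))) = 0 := by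
      intro i i' h
      by_cases hne : i = i'
      · subst hne; exact hA i h
      · exact hz_real_p_ne i i' h hne
    have hB : ∀ i h, D (some (Sum.inr i)) (Sum.inr (Sum.inl (i, h))) = 0 := by
      intro i h
      have := hcolp i h
      rw [hA] at this
      linarith
    have hB' : ∀ i i' h, D (some (Sum.inr i)) (Sum.inr (Sum.inl (i', h))) = 0 := by
      intro i i' h
      by_cases hne : i = i'
      · subst hne; exact hB i h
      · exact hz_twin_p_ne i i' h hne
    have hC : ∀ i, D (some (Sum.inr i)) (Sum.inr (Sum.inr i)) = 0 := by
      intro i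
      have h0 := hrowD (some (Sum.inr i))
      rw [Finset.sum_eq_zero (fun j (_ : j ∈ Finset.univ) => hz_twin_col i j)] at h0
      rw [Finset.sum_eq_zero (fun q (_ : q ∈ (Finset.univ : Finset (S × H))) =>
        hB' i q.1 q.2)] at h0
      rw [Finset.sum_eq_single_of_mem i (Finset.mem_univ i)
        (fun i' _ hne => hz_twin_t_ne i i' (Ne.symm hne))] at h0
      linarith
    have hC' : ∀ i i', D (some (Sum.inr i)) (Sum.inr (Sum.inr i')) = 0 := by
      intro i i'
      by_cases hne : i = i'
      · subst hne; exact hC i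
      · exact hz_twin_t_ne i i' hne
    have hN : ∀ i, D none (Sum.inr (Sum.inr i)) = 0 := by
      intro i
      have h0 := hcolD (Sum.inr (Sum.inr i))
      rw [Finset.sum_eq_zero (fun i' (_ : i' ∈ Finset.univ) => hz_real_t i' i)] at h0
      rw [hsingle_twin_t, hC] at h0
      linarith
    apply hD0
    funext s p
    rcases s with _ | (i | i) <;> rcases p with j | (⟨i', h⟩ | i')
    · exact hz_none_col j
    · exact hz_none_p (i', h)
    · exact hN i'
    · exact hd0 i j
    · exact hA' i i' h
    · exact hz_real_t i i'
    · exact hz_twin_col i j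
    · exact hB' i i' h
    · exact hC' i i'
  · -- support
    intro i j hI
    exact hDsupp _ _ hI
  · -- column sums
    intro j
    have h0 := hcolD (Sum.inl j)
    rw [hz_none_col, Finset.sum_eq_zero (fun i (_ : i ∈ Finset.univ) => hz_twin_col i j)] at h0
    have : (∑ i, D (some (Sum.inl i)) (Sum.inl j)) = ∑ i, d i j := rfl
    linarith [h0]
  · -- tight row sums
    intro i hIr
    have hRint : IsInt (Rtw χ x i) := by
      rw [Rtw_eq]
      exact (isInt_sum (fun h _ => IsInt.sub isInt_one' ⟨_, rfl⟩)).add hIr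
    have htwint : D (some (Sum.inr i)) (Sum.inr (Sum.inr i)) = 0 := by
      apply hDsupp
      simp only [aug, if_pos rfl]
      exact IsInt.sub ⟨_, rfl⟩ hRint
    have htwinrow := hrowD (some (Sum.inr i))
    rw [Finset.sum_eq_zero (fun j (_ : j ∈ Finset.univ) => hz_twin_col i j)] at htwinrow
    have hqtwin : (∑ q : S × H, D (some (Sum.inr i)) (Sum.inr (Sum.inl q)))
        = ∑ h, D (some (Sum.inr i)) (Sum.inr (Sum.inl (i, h))) := by
      rw [Fintype.sum_prod_type]
      rw [Finset.sum_eq_single_of_mem i (Finset.mem_univ i)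
        (fun i' _ hne => Finset.sum_eq_zero (fun h _ => hz_twin_p_ne i i' h (Ne.symm hne)))]
    rw [hqtwin] at htwinrow
    rw [Finset.sum_eq_single_of_mem i (Finset.mem_univ i)
      (fun i' _ hne => hz_twin_t_ne i i' (Ne.symm hne)), htwint] at htwinrow
    -- so ∑ h, D (twin i) (p (i,h)) = 0
    have hrowreal := hrowD (some (Sum.inl i))
    have hqreal : (∑ q : S × H, D (some (Sum.inl i)) (Sum.inr (Sum.inl q)))
        = ∑ h, D (some (Sum.inl i)) (Sum.inr (Sum.inl (i, h))) := by
      rw [Fintype.sum_prod_type]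
      rw [Finset.sum_eq_single_of_mem i (Finset.mem_univ i)
        (fun i' _ hne => Finset.sum_eq_zero (fun h _ => hz_real_p_ne i i' h (Ne.symm hne)))]
    rw [hqreal] at hrowreal
    rw [Finset.sum_eq_zero (fun i' (_ : i' ∈ Finset.univ) => hz_real_t i i')] at hrowreal
    have hsum_pair : (∑ h, D (some (Sum.inl i)) (Sum.inr (Sum.inl (i, h))))
        + (∑ h, D (some (Sum.inr i)) (Sum.inr (Sum.inl (i, h)))) = 0 := by
      rw [← Finset.sum_add_distrib]
      exact Finset.sum_eq_zero (fun h _ => hcolp i h)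
    have : (∑ j, D (some (Sum.inl i)) (Sum.inl j)) = ∑ j, d i j := rfl
    linarith [htwinrow, hrowreal, hsum_pair]
  · -- tight color sums
    intro i h hIc
    have hp0 : D (some (Sum.inl i)) (Sum.inr (Sum.inl (i, h))) = 0 := by
      apply hDsupp
      simp only [aug, if_pos rfl]
      unfold eI
      rw [ceil_of_isInt hIc]
      simpa using isInt_zero
    have := hDcsum_real i h
    rw [hsingle_colreal, hp0, add_zero] at this
    exact this
end Perturb



lemma floor_ceil_mono {a b c : ℝ} (h1 : (⌊a⌋:ℝ) ≤ b) (h2 : b ≤ (⌈a⌉:ℝ))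
    (h3 : (⌊b⌋:ℝ) ≤ c) (h4 : c ≤ (⌈b⌉:ℝ)) : (⌊a⌋:ℝ) ≤ c ∧ c ≤ (⌈a⌉:ℝ) := by
  constructor
  · have h : ⌊a⌋ ≤ ⌊b⌋ := Int.le_floor.mpr h1
    exact le_trans (by exact_mod_cast h) h3
  · have h : ⌈b⌉ ≤ ⌈a⌉ := Int.ceil_le.mpr h2
    exact le_trans h4 (by exact_mod_cast h)

section Move
variable {S P H : Type*} [Fintype S] [Fintype P] [Fintype H] [DecidableEq H]

/-- all the linear quantities we track -/
def cval (χ : P → H) (x : S → P → ℝ) : ((S × P) ⊕ ((S × H) ⊕ S)) → ℝ :=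
  Sum.elim (fun e => x e.1 e.2)
    (Sum.elim (fun q => csum χ x q.1 q.2) (fun i => ∑ j, x i j))

/-- number of fractional tracked quantities -/
noncomputable def fracCount (χ : P → H) (x : S → P → ℝ) : ℕ :=
  (@Finset.filter _ (fun c => ¬ IsInt (cval χ x c)) (Classical.decPred _) Finset.univ).card

lemma cval_lin (χ : P → H) (x d : S → P → ℝ) (lam : ℝ) (c) :
    cval χ (fun i j => x i j + lam * d i j) c = cval χ x c + lam * cval χ d c := by
  rcases c with ⟨i, j⟩ | (⟨i, h⟩ | i)
  · rfl
  · show csum χ (fun i j => x i j + lam * d i j) i h = csum χ x i h + lam * csum χ d i h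
    unfold csum
    rw [Finset.mul_sum, ← Finset.sum_add_distrib]
    apply Finset.sum_congr rfl
    intro j _
    by_cases hj : χ j = h <;> simp [hj]
  · show (∑ j, (x i j + lam * d i j)) = (∑ j, x i j) + lam * ∑ j, d i j
    rw [Finset.mul_sum, ← Finset.sum_add_distrib]

lemma move (χ : P → H) (x d : S → P → ℝ)
    (hx : ∀ i j, 0 ≤ x i j ∧ x i j ≤ 1) (hx1 : ∀ j, ∑ i, x i j = 1)
    (hd0 : d ≠ 0)
    (hsupp : ∀ i j, IsInt (x i j) → d i j = 0)
    (hdcol : ∀ j, ∑ i, d i j = 0)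
    (hdrow : ∀ i, IsInt (∑ j, x i j) → ∑ j, d i j = 0)
    (hdcsum : ∀ i h, IsInt (csum χ x i h) → csum χ d i h = 0) :
    ∃ (x' : S → P → ℝ) (lam : ℝ), 0 < lam ∧
      (∀ i j, x' i j = x i j + lam * d i j) ∧
      (∀ i j, 0 ≤ x' i j ∧ x' i j ≤ 1) ∧ (∀ j, ∑ i, x' i j = 1) ∧
      fracCount χ x' < fracCount χ x ∧
      (∀ i, (⌊∑ j, x i j⌋:ℝ) ≤ ∑ j, x' i j ∧ (∑ j, x' i j) ≤ (⌈∑ j, x i j⌉:ℝ)) ∧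
      (∀ i h, (⌊csum χ x i h⌋:ℝ) ≤ csum χ x' i h ∧ csum χ x' i h ≤ (⌈csum χ x i h⌉:ℝ)) := by
  classical
  -- fractionality of active quantities
  have hfrac : ∀ c, cval χ d c ≠ 0 → ¬ IsInt (cval χ x c) := by
    intro c hc hI
    apply hc
    rcases c with ⟨i, j⟩ | (⟨i, h⟩ | i)
    · exact hsupp i j hI
    · exact hdcsum i h hI
    · exact hdrow i hI
  set active : Finset ((S × P) ⊕ ((S × H) ⊕ S)) :=
    Finset.univ.filter (fun c => cval χ d c ≠ 0) with hactdef
  have hact_ne : active.Nonempty := by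
    have : ∃ i j, d i j ≠ 0 := by
      by_contra hno
      push_neg at hno
      exact hd0 (funext fun i => funext fun j => hno i j)
    obtain ⟨i, j, hij⟩ := this
    exact ⟨Sum.inl (i, j), by rw [hactdef]; exact Finset.mem_filter.mpr ⟨Finset.mem_univ _, hij⟩⟩
  set bound : ((S × P) ⊕ ((S × H) ⊕ S)) → ℝ := fun c =>
    if 0 < cval χ d c then ((⌈cval χ x c⌉:ℝ) - cval χ x c) / (cval χ d c)
    else (cval χ x c - (⌊cval χ x c⌋:ℝ)) / (- cval χ d c) with hbdef
  have hbound_pos : ∀ c ∈ active, 0 < bound c := by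
    intro c hc
    have hr : cval χ d c ≠ 0 := by
      rw [hactdef] at hc
      simpa using (Finset.mem_filter.mp hc).2
    have hf := hfrac c hr
    simp only [hbdef]
    by_cases hpos : 0 < cval χ d c
    · rw [if_pos hpos]
      exact div_pos (by linarith [lt_ceil_of_frac hf]) hpos
    · rw [if_neg hpos]
      have : cval χ d c < 0 := lt_of_le_of_ne (not_lt.mp hpos) hr
      exact div_pos (by linarith [floor_lt_of_frac hf]) (by linarith)
  set lam : ℝ := (active.image bound).min' (hact_ne.image bound) with hlamdef
  have hlam_mem : ∃ c0 ∈ active, bound c0 = lam := by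
    have := Finset.min'_mem (active.image bound) (hact_ne.image bound)
    rw [Finset.mem_image] at this
    obtain ⟨c0, hc0, hb⟩ := this
    exact ⟨c0, hc0, hb⟩
  have hlam_le : ∀ c ∈ active, lam ≤ bound c := by
    intro c hc
    exact Finset.min'_le _ _ (Finset.mem_image_of_mem bound hc)
  obtain ⟨c0, hc0act, hc0b⟩ := hlam_mem
  have hlam_pos : 0 < lam := hc0b ▸ hbound_pos c0 hc0act
  set x' : S → P → ℝ := fun i j => x i j + lam * d i j with hx'def
  have hx'lin : ∀ c, cval χ x' c = cval χ x c + lam * cval χ d c := by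
    intro c
    rw [hx'def]
    exact cval_lin χ x d lam c
  -- windows
  have hwin : ∀ c, (⌊cval χ x c⌋:ℝ) ≤ cval χ x' c ∧ cval χ x' c ≤ (⌈cval χ x c⌉:ℝ) := by
    intro c
    rw [hx'lin]
    by_cases hr : cval χ d c = 0
    · rw [hr, mul_zero, add_zero]
      exact ⟨Int.floor_le _, Int.le_ceil _⟩
    · have hcact : c ∈ active := by
        rw [hactdef]; simp [hr]
      have hle := hlam_le c hcact
      simp only [hbdef] at hle
      by_cases hpos : 0 < cval χ d c
      · rw [if_pos hpos] at hle
        constructor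
        · nlinarith [Int.floor_le (cval χ x c), hlam_pos, hpos]
        · have := (le_div_iff₀ hpos).mp hle
          linarith
      · have hneg : cval χ d c < 0 := lt_of_le_of_ne (not_lt.mp hpos) hr
        rw [if_neg hpos] at hle
        have := (le_div_iff₀ (by linarith : (0:ℝ) < - cval χ d c)).mp hle
        constructor
        · nlinarith
        · nlinarith [Int.le_ceil (cval χ x c), hlam_pos]
  -- preservation of integrality
  have hpres : ∀ c, IsInt (cval χ x c) → cval χ x' c = cval χ x c := by
    intro c hI
    rw [hx'lin]
    by_cases hr : cval χ d c = 0
    · rw [hr, mul_zero, add_zero]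
    · exact absurd hI (hfrac c hr)
  -- the active minimizer becomes integral
  have hc0new : IsInt (cval χ x' c0) := by
    rw [hx'lin, ← hc0b]
    simp only [hbdef]
    have hr : cval χ d c0 ≠ 0 := by
      rw [hactdef] at hc0act
      simpa using (Finset.mem_filter.mp hc0act).2
    by_cases hpos : 0 < cval χ d c0
    · rw [if_pos hpos, div_mul_cancel₀ _ hr]
      exact ⟨⌈cval χ x c0⌉, by ring⟩
    · rw [if_neg hpos]
      have hbne : - cval χ d c0 ≠ 0 := neg_ne_zero.mpr hr
      have hkey : (cval χ x c0 - (⌊cval χ x c0⌋:ℝ)) / (- cval χ d c0) * cval χ d c0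
          = -(cval χ x c0 - (⌊cval χ x c0⌋:ℝ)) := by
        calc (cval χ x c0 - (⌊cval χ x c0⌋:ℝ)) / (- cval χ d c0) * cval χ d c0
            = -((cval χ x c0 - (⌊cval χ x c0⌋:ℝ)) / (- cval χ d c0) * (- cval χ d c0)) := by ring
          _ = -(cval χ x c0 - (⌊cval χ x c0⌋:ℝ)) := by rw [div_mul_cancel₀ _ hbne]
      rw [hkey]
      exact ⟨⌊cval χ x c0⌋, by ring⟩
  have hc0frac : ¬ IsInt (cval χ x c0) := by
    apply hfrac
    rw [hactdef] at hc0act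
    simpa using (Finset.mem_filter.mp hc0act).2
  refine ⟨x', lam, hlam_pos, fun i j => rfl, ?_, ?_, ?_, ?_, ?_⟩
  · -- entries in [0,1]
    intro i j
    have hw := hwin (Sum.inl (i, j))
    by_cases hr : d i j = 0
    · have : x' i j = x i j := by rw [hx'def]; simp [hr]
      rw [this]; exact hx i j
    · have hf : ¬ IsInt (x i j) := by
        intro hI
        exact hr (hsupp i j hI)
      have hx01 : 0 < x i j ∧ x i j < 1 := by
        rcases hx i j with ⟨h0, h1⟩
        constructor
        · rcases lt_or_eq_of_le h0 with h | h
          · exact h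
          · exact absurd ⟨0, by simp [← h]⟩ hf
        · rcases lt_or_eq_of_le h1 with h | h
          · exact h
          · exact absurd ⟨1, by simp [h]⟩ hf
      have hfl : ⌊x i j⌋ = 0 := Int.floor_eq_zero_iff.mpr ⟨le_of_lt hx01.1, hx01.2⟩
      have hcl : ⌈x i j⌉ = 1 := by
        have h1 : ⌈x i j⌉ ≤ 1 := Int.ceil_le.mpr (by exact_mod_cast (hx i j).2)
        have h2 : 1 ≤ ⌈x i j⌉ := Int.ceil_pos.mpr hx01.1
        omega
      have hcv : cval χ x (Sum.inl (i, j)) = x i j := rfl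
      have hcv' : cval χ x' (Sum.inl (i, j)) = x' i j := rfl
      rw [hcv, hcv', hfl, hcl] at hw
      exact_mod_cast hw
  · -- column sums
    intro j
    rw [hx'def]
    show (∑ i, (x i j + lam * d i j)) = 1
    rw [Finset.sum_add_distrib, hx1 j, ← Finset.mul_sum, hdcol j, mul_zero, add_zero]
  · -- fracCount decreases
    unfold fracCount
    apply Finset.card_lt_card
    rw [Finset.ssubset_iff_of_subset]
    · refine ⟨c0, ?_, ?_⟩
      · simp only [Finset.mem_filter]
        exact ⟨Finset.mem_univ _, hc0frac⟩
      · simp only [Finset.mem_filter, not_and, not_not]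
        intro _
        exact hc0new
    · intro c hc
      simp only [Finset.mem_filter] at hc ⊢
      refine ⟨Finset.mem_univ _, ?_⟩
      intro hI
      exact hc.2 (by rw [hpres c hI]; exact hI)
  · -- row windows
    intro i
    have := hwin (Sum.inr (Sum.inr i))
    exact this
  · -- color windows
    intro i h
    have := hwin (Sum.inr (Sum.inl (i, h)))
    exact this
end Move


section Main
variable {S P H : Type*} [Fintype S] [Fintype P] [Fintype H] [DecidableEq H]

/-- conclusion of the rounding theorem -/
def RoundConcl (χ : P → H) (x : S → P → ℝ) : Prop :=
  ∃ (n : ℕ) (w : Fin n → ℝ) (xb : Fin n → S → P → ℝ),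
    (∀ t, 0 ≤ w t) ∧ (∑ t, w t = 1) ∧
    (∀ t, w t ≠ 0 →
      (∀ i j, xb t i j = 0 ∨ xb t i j = 1) ∧
      (∀ j, ∑ i, xb t i j = 1) ∧
      (∀ i, (⌊∑ j, x i j⌋ : ℝ) ≤ ∑ j, xb t i j ∧ (∑ j, xb t i j) ≤ (⌈∑ j, x i j⌉ : ℝ)) ∧
      (∀ i h, (⌊csum χ x i h⌋ : ℝ) ≤ csum χ (xb t) i h ∧
        csum χ (xb t) i h ≤ (⌈csum χ x i h⌉ : ℝ))) ∧
    (∀ i j, ∑ t, w t * xb t i j = x i j)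

lemma round_base (χ : P → H) (x : S → P → ℝ)
    (hx : ∀ i j, 0 ≤ x i j ∧ x i j ≤ 1) (hx1 : ∀ j, ∑ i, x i j = 1)
    (hall : ∀ i j, IsInt (x i j)) : RoundConcl χ x := by
  refine ⟨1, fun _ => 1, fun _ => x, fun t => zero_le_one, by simp, ?_, ?_⟩
  · intro t _
    refine ⟨?_, hx1, ?_, ?_⟩
    · intro i j
      show x i j = 0 ∨ x i j = 1
      obtain ⟨z, hz⟩ := hall i j
      obtain ⟨h0, h1⟩ := hx i j
      rw [hz] at h0 h1 ⊢
      have h0' : (0:ℤ) ≤ z := by exact_mod_cast h0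
      have h1' : z ≤ 1 := by exact_mod_cast h1
      have : z = 0 ∨ z = 1 := by omega
      rcases this with h | h <;> [left; right] <;> rw [h] <;> simp
    · intro i; exact ⟨Int.floor_le _, Int.le_ceil _⟩
    · intro i h; exact ⟨Int.floor_le _, Int.le_ceil _⟩
  · intro i j; simp

lemma round_aux (χ : P → H) : ∀ (N : ℕ) (x : S → P → ℝ),
    fracCount χ x ≤ N → (∀ i j, 0 ≤ x i j ∧ x i j ≤ 1) → (∀ j, ∑ i, x i j = 1) →
    RoundConcl χ x := by
  intro N
  induction N with
  | zero =>
    intro x hN hx hx1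
    classical
    by_cases hall : ∀ i j, IsInt (x i j)
    · exact round_base χ x hx hx1 hall
    · exfalso
      push_neg at hall
      obtain ⟨i0, j0, h00⟩ := hall
      have hmem : Sum.inl (i0, j0) ∈ (@Finset.filter _
          (fun c => ¬ IsInt (cval χ x c)) (Classical.decPred _) Finset.univ) := by
        simp only [Finset.mem_filter]
        exact ⟨Finset.mem_univ _, h00⟩
      have hpos := Finset.card_pos.mpr ⟨_, hmem⟩
      unfold fracCount at hN
      omega
  | succ N ih =>
    intro x hN hx hx1
    by_cases hall : ∀ i j, IsInt (x i j)
    · exact round_base χ x hx hx1 hall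
    push_neg at hall
    obtain ⟨i0, j0, h00⟩ := hall
    classical
    obtain ⟨d, hd0, hsupp, hdcol, hdrow, hdcsum⟩ := perturb χ x hx1 i0 j0 h00
    obtain ⟨xp, lp, hlp, hxp_eq, hxp, hxp1, hxpc, hxpr, hxpcs⟩ :=
      move χ x d hx hx1 hd0 hsupp hdcol hdrow hdcsum
    have hd0m : (fun i j => -(d i j)) ≠ 0 := by
      intro h
      apply hd0
      funext i j
      have := congrFun (congrFun h i) j
      simpa using this
    have hsuppm : ∀ i j, IsInt (x i j) → -(d i j) = 0 := fun i j hI => by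
      rw [hsupp i j hI]; ring
    have hdcolm : ∀ j, (∑ i, -(d i j)) = 0 := fun j => by
      rw [Finset.sum_neg_distrib, hdcol j]; ring
    have hdrowm : ∀ i, IsInt (∑ j, x i j) → (∑ j, -(d i j)) = 0 := fun i hI => by
      rw [Finset.sum_neg_distrib, hdrow i hI]; ring
    have hcsum_neg : ∀ i h, csum χ (fun i j => -(d i j)) i h = - csum χ d i h := by
      intro i h
      unfold csum
      rw [← Finset.sum_neg_distrib]
      apply Finset.sum_congr rfl
      intro j _
      by_cases hj : χ j = h <;> simp [hj]
    have hdcsumm : ∀ i h, IsInt (csum χ x i h) → csum χ (fun i j => -(d i j)) i h = 0 :=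
      fun i h hI => by rw [hcsum_neg, hdcsum i h hI]; ring
    obtain ⟨xm, lm, hlm, hxm_eq, hxm, hxm1, hxmc, hxmr, hxmcs⟩ :=
      move χ x (fun i j => -(d i j)) hx hx1 hd0m hsuppm hdcolm hdrowm hdcsumm
    obtain ⟨n1, w1, xb1, hw1, hw1s, hsupp1, hexp1⟩ := ih xp (by omega) hxp hxp1
    obtain ⟨n2, w2, xb2, hw2, hw2s, hsupp2, hexp2⟩ := ih xm (by omega) hxm hxm1
    set θ : ℝ := lm / (lp + lm) with hθdef
    have hs : 0 < lp + lm := by linarith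
    have hθpos : 0 < θ := div_pos hlm hs
    have h1mθ : 1 - θ = lp / (lp + lm) := by
      rw [hθdef]; field_simp; ring
    have h1mθpos : 0 < 1 - θ := by rw [h1mθ]; exact div_pos hlp hs
    have hcoef : θ * lp - (1 - θ) * lm = 0 := by
      rw [h1mθ, hθdef]; field_simp; ring
    have hcomb : ∀ i j, θ * xp i j + (1 - θ) * xm i j = x i j := by
      intro i j
      rw [hxp_eq i j, hxm_eq i j]
      linear_combination (d i j) * hcoef
    refine ⟨n1 + n2, Fin.append (fun t => θ * w1 t) (fun t => (1 - θ) * w2 t),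
      Fin.append xb1 xb2, ?_, ?_, ?_, ?_⟩
    · intro t
      refine Fin.addCases ?_ ?_ t
      · intro u; rw [Fin.append_left]; exact mul_nonneg (le_of_lt hθpos) (hw1 u)
      · intro u; rw [Fin.append_right]; exact mul_nonneg (le_of_lt h1mθpos) (hw2 u)
    · rw [Fin.sum_univ_add]
      simp only [Fin.append_left, Fin.append_right]
      rw [← Finset.mul_sum, ← Finset.mul_sum, hw1s, hw2s]
      ring
    · intro t
      refine Fin.addCases ?_ ?_ t
      · intro u hwu
        simp only [Fin.append_left] at hwu ⊢
        have hw1u : w1 u ≠ 0 := by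
          intro h; exact hwu (by rw [h, mul_zero])
        obtain ⟨hb01, hbcol, hbrow, hbcs⟩ := hsupp1 u hw1u
        refine ⟨hb01, hbcol, ?_, ?_⟩
        · intro i
          exact floor_ceil_mono (hxpr i).1 (hxpr i).2 (hbrow i).1 (hbrow i).2
        · intro i h
          exact floor_ceil_mono (hxpcs i h).1 (hxpcs i h).2 (hbcs i h).1 (hbcs i h).2
      · intro u hwu
        simp only [Fin.append_right] at hwu ⊢
        have hw2u : w2 u ≠ 0 := by
          intro h; exact hwu (by rw [h, mul_zero])
        obtain ⟨hb01, hbcol, hbrow, hbcs⟩ := hsupp2 u hw2u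
        refine ⟨hb01, hbcol, ?_, ?_⟩
        · intro i
          exact floor_ceil_mono (hxmr i).1 (hxmr i).2 (hbrow i).1 (hbrow i).2
        · intro i h
          exact floor_ceil_mono (hxmcs i h).1 (hxmcs i h).2 (hbcs i h).1 (hbcs i h).2
    · intro i j
      rw [Fin.sum_univ_add]
      simp only [Fin.append_left, Fin.append_right]
      have e1 : (∑ u : Fin n1, θ * w1 u * xb1 u i j) = θ * ∑ u, w1 u * xb1 u i j := by
        rw [Finset.mul_sum]
        apply Finset.sum_congr rfl
        intro u _
        ring
      have e2 : (∑ u : Fin n2, (1 - θ) * w2 u * xb2 u i j)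
          = (1 - θ) * ∑ u, w2 u * xb2 u i j := by
        rw [Finset.mul_sum]
        apply Finset.sum_congr rfl
        intro u _
        ring
      rw [e1, e2, hexp1 i j, hexp2 i j]
      exact hcomb i j
end Main

end DepRound
end

/-- Randomized dependent rounding: there is a finitely supported probability distribution
over 0/1 assignment matrices that, with probability 1, assigns each point once and keeps
every cluster size and per-cluster per-color count between the floor and the ceiling of
its fractional value, and whose entrywise expectation equals the fractional solution. -/
theorem stmt_15 {S P H : Type*} [Fintype S] [Fintype P] [Fintype H] [DecidableEq H]
    (χ : P → H) (x : S → P → ℝ) (hx : ∀ i j, x i j ∈ Set.Icc (0 : ℝ) 1)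
    (hx1 : ∀ j, ∑ i, x i j = 1) :
    ∃ (n : ℕ) (w : Fin n → ℝ) (xb : Fin n → S → P → ℝ),
      (∀ t, 0 ≤ w t) ∧ (∑ t, w t = 1) ∧
      (∀ t, w t ≠ 0 →
        (∀ i j, xb t i j = 0 ∨ xb t i j = 1) ∧
        (∀ j, ∑ i, xb t i j = 1) ∧
        (∀ i, (⌊∑ j, x i j⌋ : ℝ) ≤ ∑ j, xb t i j ∧ (∑ j, xb t i j) ≤ (⌈∑ j, x i j⌉ : ℝ)) ∧
        (∀ i h, (⌊∑ j ∈ Finset.univ.filter (fun j => χ j = h), x i j⌋ : ℝ) ≤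
            (∑ j ∈ Finset.univ.filter (fun j => χ j = h), xb t i j) ∧
          (∑ j ∈ Finset.univ.filter (fun j => χ j = h), xb t i j) ≤
            (⌈∑ j ∈ Finset.univ.filter (fun j => χ j = h), x i j⌉ : ℝ))) ∧
      (∀ i j, ∑ t, w t * xb t i j = x i j) := by
  classical
  have hx' : ∀ i j, 0 ≤ x i j ∧ x i j ≤ 1 := fun i j => ⟨(hx i j).1, (hx i j).2⟩
  obtain ⟨n, w, xb, hw, hws, hsup, hexp⟩ :=
    DepRound.round_aux χ (DepRound.fracCount χ x) x le_rfl hx' hx1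
  refine ⟨n, w, xb, hw, hws, ?_, hexp⟩
  intro t ht
  obtain ⟨h01, hcol, hrow, hcs⟩ := hsup t ht
  refine ⟨h01, hcol, hrow, ?_⟩
  intro i h
  have hconv : ∀ y : S → P → ℝ,
      (∑ j ∈ Finset.univ.filter (fun j => χ j = h), y i j) = DepRound.csum χ y i h := by
    intro y
    rw [DepRound.csum, Finset.sum_filter]
  rw [hconv x, hconv (xb t)]
  exact hcs i h
end
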